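/- arXiv:2208.01470 — 9 statements merged into one kernel-verified Lean document; each statement's English description precedes it below -/
import Mathlib

section
/- Let r, t, n_1, ..., n_r be positive integers with r ≥ t ≥ 2. Then ex(K_{n_1,...,n_r}, K_t) = f_t(n_1,...,n_r). -/
open SimpleGraph Finset

/-- `F` has a (not necessarily induced) copy in `G`:  there is an injective map of the
vertices of `F` into the vertices of `G` preserving adjacency. -/
def HasCopy {α β : Type*} (G : SimpleGraph α) (F : SimpleGraph β) : Prop :=
  ∃ f : β → α, Function.Injective f ∧ ∀ ⦃a b⦄, F.Adj a b → G.Adj (f a) (f b)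

/-- `exNum G F` is the maximum number of edges of a spanning subgraph of `G`
containing no copy of `F`. -/
noncomputable def exNum {α β : Type*} [Fintype α] (G : SimpleGraph α) (F : SimpleGraph β) : ℕ :=
  sSup {m | ∃ H : SimpleGraph α, H ≤ G ∧ ¬ HasCopy H F ∧ m = H.edgeSet.ncard}

/-- `kCliques k t` is the disjoint union of `k` copies of the complete graph `K_t`. -/
def kCliques (k t : ℕ) : SimpleGraph (Fin k × Fin t) :=
  SimpleGraph.fromRel (fun p q => p.1 = q.1)

/-- The complete multipartite graph with parts of sizes `n 0, …, n (r-1)`. -/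
abbrev completeMultipartite {r : ℕ} (n : Fin r → ℕ) : SimpleGraph (Σ i : Fin r, Fin (n i)) :=
  completeMultipartiteGraph (fun i => Fin (n i))

/-- The sum of `x` over the part of the (labelled) partition `g` with label `i`. -/
def partSum {r s : ℕ} (x : Fin r → ℕ) (g : Fin r → Fin s) (i : Fin s) : ℕ :=
  ∑ a ∈ Finset.univ.filter (fun a => g a = i), x a

/-- The sum, over unordered pairs of distinct parts of the (labelled) partition `g`,
of the products of the part sums of `x`. -/
def pairProdSum {r s : ℕ} (x : Fin r → ℕ) (g : Fin r → Fin s) : ℕ :=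
  ∑ p ∈ Finset.univ.filter (fun p : Fin s × Fin s => p.1 < p.2),
    partSum x g p.1 * partSum x g p.2

/-- The function `f_t` : the maximum, over all partitions of `{0, …, r-1}` into `t-1`
nonempty parts (encoded as surjections onto `Fin (t-1)`), of the sum over unordered pairs
of distinct parts of the products of the part sums. -/
def fT {r : ℕ} (t : ℕ) (x : Fin r → ℕ) : ℕ :=
  (Finset.univ.filter (fun g : Fin r → Fin (t - 1) => Function.Surjective g)).sup
    (fun g => pairProdSum x g)

lemma sum_ne_eq_two_mul_lt {s : ℕ} (σ : Fin s → ℕ) :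
    ∑ p ∈ univ.filter (fun p : Fin s × Fin s => p.1 ≠ p.2), σ p.1 * σ p.2
      = 2 * ∑ p ∈ univ.filter (fun p : Fin s × Fin s => p.1 < p.2), σ p.1 * σ p.2 := by
  classical
  have hsplit : (univ : Finset (Fin s × Fin s)).filter (fun p => p.1 ≠ p.2)
      = (univ.filter (fun p : Fin s × Fin s => p.1 < p.2)) ∪ (univ.filter (fun p : Fin s × Fin s => p.2 < p.1)) := by
    ext p
    simp only [Finset.mem_filter, Finset.mem_union, Finset.mem_univ, true_and]
    constructor
    · exact fun h => h.lt_or_gt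
    · rintro (h | h) <;> [exact h.ne; exact h.ne']
  have hdisj : Disjoint (univ.filter (fun p : Fin s × Fin s => p.1 < p.2))
      (univ.filter (fun p : Fin s × Fin s => p.2 < p.1)) := by
    rw [Finset.disjoint_left]
    intro p hp hq
    simp only [Finset.mem_filter] at hp hq
    exact absurd hq.2 hp.2.asymm
  rw [hsplit, Finset.sum_union hdisj]
  have hswap : ∑ p ∈ univ.filter (fun p : Fin s × Fin s => p.2 < p.1), σ p.1 * σ p.2
      = ∑ p ∈ univ.filter (fun p : Fin s × Fin s => p.1 < p.2), σ p.1 * σ p.2 := by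
    refine Finset.sum_nbij' Prod.swap Prod.swap ?_ ?_ ?_ ?_ ?_ <;>
      simp [Nat.mul_comm]
  omega



lemma sum_ne_add_diag' {ι : Type*} [Fintype ι] [DecidableEq ι] (σ : ι → ℕ) :
    ∑ p ∈ univ.filter (fun p : ι × ι => p.1 ≠ p.2), σ p.1 * σ p.2 + ∑ p : ι, σ p * σ p
      = (∑ p : ι, σ p) * (∑ p : ι, σ p) := by
  rw [Finset.sum_mul_sum]
  rw [← Finset.sum_product']
  have h1 : (univ ×ˢ univ : Finset (ι × ι)) = univ := Finset.univ_product_univ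
  rw [h1, ← Finset.sum_filter_add_sum_filter_not (univ : Finset (ι × ι)) (fun p : ι × ι => p.1 ≠ p.2)]
  have h2 : (univ : Finset (ι × ι)).filter (fun p => ¬ p.1 ≠ p.2)
      = Finset.univ.diag := by
    ext p; simp [Finset.mem_diag, eq_comm]
  rw [h2, Finset.sum_diag]

lemma surjectivize {r s : ℕ} (x : Fin r → ℕ) (hs : 0 < s) (hrs : s ≤ r) :
    ∀ m : ℕ, ∀ g : Fin r → Fin s, (univ.filter (fun p => ∀ a, g a ≠ p)).card ≤ m →
    ∃ g2 : Fin r → Fin s, Function.Surjective g2 ∧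
      ∑ p ∈ univ.filter (fun p : Fin s × Fin s => p.1 ≠ p.2),
        (∑ a ∈ univ.filter (fun a => g a = p.1), x a) * (∑ a ∈ univ.filter (fun a => g a = p.2), x a)
      ≤ ∑ p ∈ univ.filter (fun p : Fin s × Fin s => p.1 ≠ p.2),
        (∑ a ∈ univ.filter (fun a => g2 a = p.1), x a) * (∑ a ∈ univ.filter (fun a => g2 a = p.2), x a) := by
  intro m
  induction m with
  | zero =>
    intro g hcard
    refine ⟨g, ?_, le_refl _⟩
    intro p
    by_contra hc
    push_neg at hc
    have hmem : p ∈ univ.filter (fun p => ∀ a, g a ≠ p) := by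
      simp only [Finset.mem_filter, Finset.mem_univ, true_and]
      exact fun a h => hc a h
    have := Finset.card_pos.2 ⟨p, hmem⟩
    omega
  | succ m ih =>
    intro g hcard
    rcases Nat.eq_zero_or_pos (univ.filter (fun p => ∀ a, g a ≠ p)).card with h0 | hpos
    · exact ih g (by omega)
    obtain ⟨p₀, hp₀⟩ := Finset.card_pos.1 hpos
    have hp₀miss : ∀ a, g a ≠ p₀ := by
      simp only [Finset.mem_filter] at hp₀; exact hp₀.2
    have hfib : ∃ q₀ : Fin s, 2 ≤ (univ.filter (fun a => g a = q₀)).card := by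
      by_contra hc
      push_neg at hc
      have hr : r = ∑ q : Fin s, (univ.filter (fun a : Fin r => g a = q)).card := by
        have := Finset.card_eq_sum_card_fiberwise (f := g) (s := (univ : Finset (Fin r)))
          (t := (univ : Finset (Fin s))) (fun a _ => Finset.mem_univ _)
        simpa using this
      have h1 : ∑ q : Fin s, (univ.filter (fun a : Fin r => g a = q)).card
          = (univ.filter (fun a : Fin r => g a = p₀)).card
            + ∑ q ∈ univ.erase p₀, (univ.filter (fun a : Fin r => g a = q)).card :=
        (Finset.add_sum_erase _ _ (Finset.mem_univ p₀)).symm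
      have h2 : (univ.filter (fun a : Fin r => g a = p₀)).card = 0 := by
        rw [Finset.card_eq_zero]
        exact Finset.filter_eq_empty_iff.2 (fun a _ => hp₀miss a)
      have h3 : ∑ q ∈ univ.erase p₀, (univ.filter (fun a : Fin r => g a = q)).card
          ≤ ∑ q ∈ univ.erase p₀, 1 :=
        Finset.sum_le_sum (fun q _ => by have := hc q; omega)
      have h4 : ∑ q ∈ (univ : Finset (Fin s)).erase p₀, 1 = s - 1 := by
        rw [Finset.sum_const, Nat.smul_one_eq_cast, Finset.card_erase_of_mem (Finset.mem_univ _)]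
        simp
      omega
    obtain ⟨q₀, hq₀⟩ := hfib
    obtain ⟨a₀, ha₀, a₁, ha₁, hne⟩ :=
      Finset.one_lt_card.1 (by omega : 1 < (univ.filter (fun a => g a = q₀)).card)
    have hga₀ : g a₀ = q₀ := (Finset.mem_filter.1 ha₀).2
    have hga₁ : g a₁ = q₀ := (Finset.mem_filter.1 ha₁).2
    have hp₀q₀ : p₀ ≠ q₀ := fun h => hp₀miss a₀ (h ▸ hga₀)
    classical
    set g1 : Fin r → Fin s := Function.update g a₀ p₀ with hg1
    have hg1a₀ : g1 a₀ = p₀ := Function.update_self _ _ _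
    have hg1ne : ∀ a, a ≠ a₀ → g1 a = g a := fun a ha => Function.update_of_ne ha _ _
    have hfibe : ∀ p, p ≠ p₀ → p ≠ q₀ →
        univ.filter (fun a => g1 a = p) = univ.filter (fun a => g a = p) := by
      intro p h1 h2
      ext a
      simp only [Finset.mem_filter, Finset.mem_univ, true_and]
      by_cases ha : a = a₀
      · subst ha
        rw [hg1a₀, hga₀]
        exact ⟨fun hh => absurd hh.symm h1, fun hh => absurd hh.symm h2⟩
      · rw [hg1ne a ha]
    have hfibp₀ : univ.filter (fun a => g1 a = p₀) = {a₀} := by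
      ext a
      simp only [Finset.mem_filter, Finset.mem_univ, true_and, Finset.mem_singleton]
      by_cases ha : a = a₀
      · subst ha; rw [hg1a₀]; simp
      · rw [hg1ne a ha]
        exact ⟨fun hh => absurd hh (hp₀miss a), fun hh => absurd hh ha⟩
    have hfibq₀ : univ.filter (fun a => g1 a = q₀)
        = (univ.filter (fun a => g a = q₀)).erase a₀ := by
      ext a
      simp only [Finset.mem_filter, Finset.mem_univ, true_and, Finset.mem_erase]
      by_cases ha : a = a₀
      · subst ha; rw [hg1a₀]
        exact ⟨fun hh => absurd hh hp₀q₀, fun hh => absurd rfl hh.1⟩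
      · rw [hg1ne a ha]
        exact ⟨fun hh => ⟨ha, hh⟩, fun hh => hh.2⟩
    have hmiss1 : (univ.filter (fun p => ∀ a, g1 a ≠ p))
        ⊆ (univ.filter (fun p => ∀ a, g a ≠ p)).erase p₀ := by
      intro p hp
      simp only [Finset.mem_filter, Finset.mem_univ, true_and] at hp
      have hpp₀ : p ≠ p₀ := fun h => hp a₀ (h ▸ hg1a₀)
      refine Finset.mem_erase.2 ⟨hpp₀, Finset.mem_filter.2 ⟨Finset.mem_univ _, fun a hga => ?_⟩⟩
      by_cases ha : a = a₀
      · subst ha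
        have hpq : p = q₀ := hga₀.symm.trans hga |>.symm ▸ (hga ▸ rfl)
        exact hp a₁ (by rw [hg1ne a₁ (Ne.symm hne), hga₁, ← hga₀, hga])
      · exact hp a (by rw [hg1ne a ha, hga])
    have hcard1 : (univ.filter (fun p => ∀ a, g1 a ≠ p)).card ≤ m := by
      have h5 := Finset.card_le_card hmiss1
      have h6 := Finset.card_erase_of_mem hp₀
      omega
    obtain ⟨g2, hsurj, hle⟩ := ih g1 hcard1
    refine ⟨g2, hsurj, le_trans ?_ hle⟩
    set σ : Fin s → ℕ := fun p => ∑ a ∈ univ.filter (fun a => g a = p), x a with hσ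
    set σ1 : Fin s → ℕ := fun p => ∑ a ∈ univ.filter (fun a => g1 a = p), x a with hσ1
    have htot : ∑ p, σ p = ∑ p, σ1 p := by
      rw [hσ, hσ1, Finset.sum_fiberwise univ g x, Finset.sum_fiberwise univ g1 x]
    have hσp₀ : σ p₀ = 0 := by
      have he : univ.filter (fun a => g a = p₀) = ∅ :=
        Finset.filter_eq_empty_iff.2 (fun a _ => hp₀miss a)
      simp only [hσ]
      rw [he, Finset.sum_empty]
    have hσ1p₀ : σ1 p₀ = x a₀ := by
      simp only [hσ1]
      rw [hfibp₀, Finset.sum_singleton]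
    have hσq₀ : σ q₀ = x a₀ + σ1 q₀ := by
      simp only [hσ, hσ1]
      rw [hfibq₀]
      exact (Finset.add_sum_erase _ _ ha₀).symm
    have hσe : ∀ p, p ≠ p₀ → p ≠ q₀ → σ p = σ1 p := by
      intro p h1 h2
      simp only [hσ, hσ1]
      rw [hfibe p h1 h2]
    have hq₀mem : q₀ ∈ (univ : Finset (Fin s)).erase p₀ :=
      Finset.mem_erase.2 ⟨Ne.symm hp₀q₀, Finset.mem_univ _⟩
    have hsq : ∑ p, σ1 p * σ1 p ≤ ∑ p, σ p * σ p := by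
      rw [← Finset.add_sum_erase _ (fun p => σ1 p * σ1 p) (Finset.mem_univ p₀),
          ← Finset.add_sum_erase _ (fun p => σ p * σ p) (Finset.mem_univ p₀),
          ← Finset.add_sum_erase _ (fun p => σ1 p * σ1 p) hq₀mem,
          ← Finset.add_sum_erase _ (fun p => σ p * σ p) hq₀mem]
      have hrest : ∑ p ∈ ((univ : Finset (Fin s)).erase p₀).erase q₀, σ1 p * σ1 p
          = ∑ p ∈ ((univ : Finset (Fin s)).erase p₀).erase q₀, σ p * σ p := by
        refine Finset.sum_congr rfl (fun p hp => ?_)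
        have h := Finset.mem_erase.1 hp
        rw [hσe p (Finset.mem_erase.1 h.2).1 h.1]
      rw [hrest, hσp₀, hσ1p₀, hσq₀]
      nlinarith [sq_nonneg (x a₀ + σ1 q₀)]
    have id1 := sum_ne_add_diag' σ
    have id2 := sum_ne_add_diag' σ1
    rw [htot] at id1
    have key : ∑ p ∈ univ.filter (fun p : Fin s × Fin s => p.1 ≠ p.2), σ p.1 * σ p.2
        ≤ ∑ p ∈ univ.filter (fun p : Fin s × Fin s => p.1 ≠ p.2), σ1 p.1 * σ1 p.2 := by
      omega
    exact key


lemma weighted_turan {r : ℕ} (x : Fin r → ℕ) (t' : ℕ) :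
    ∀ (H : SimpleGraph (Fin r)), ∀ _ : DecidableRel H.Adj, ∀ (S : Finset (Fin r)),
    (¬ ∃ f : Fin (t' + 2) → Fin r, Function.Injective f ∧ (∀ i, f i ∈ S) ∧
        ∀ i j, i ≠ j → H.Adj (f i) (f j)) →
    ∃ g : Fin r → Fin (t' + 1),
      ∑ p ∈ (S ×ˢ S).filter (fun p => H.Adj p.1 p.2), x p.1 * x p.2 ≤
      ∑ p ∈ univ.filter (fun p : Fin (t' + 1) × Fin (t' + 1) => p.1 ≠ p.2),
        (∑ a ∈ S.filter (fun a => g a = p.1), x a) * (∑ a ∈ S.filter (fun a => g a = p.2), x a) := by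
  induction t' with
  | zero =>
    intro H _ S hfree
    refine ⟨fun _ => 0, ?_⟩
    have h1 : (univ : Finset (Fin 1 × Fin 1)).filter (fun p => p.1 ≠ p.2) = ∅ := by
      apply Finset.filter_eq_empty_iff.2
      intro p _
      simp [Subsingleton.elim p.1 p.2]
    have h2 : (S ×ˢ S).filter (fun p => H.Adj p.1 p.2) = ∅ := by
      apply Finset.filter_eq_empty_iff.2
      rintro ⟨i, j⟩ hp
      simp only [Finset.mem_product] at hp
      intro hadj
      apply hfree
      refine ⟨![i, j], ?_, ?_, ?_⟩
      · intro a b hab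
        fin_cases a <;> fin_cases b <;> simp_all <;>
          exact absurd hab (by exact hadj.ne) <;> skip
      · intro a; fin_cases a
        · exact hp.1
        · exact hp.2
      · intro a b hab
        fin_cases a <;> fin_cases b <;> simp_all [hadj.symm]
    rw [h1, h2]
    simp
  | succ t' ih =>
    intro H hdec S hfree
    rcases S.eq_empty_or_nonempty with rfl | hS
    · exact ⟨fun _ => 0, by simp⟩
    set d : Fin r → ℕ := fun u => ∑ w ∈ S.filter (fun w => H.Adj u w), x w with hd
    obtain ⟨v, hvS, hvmax⟩ := Finset.exists_max_image S d hS
    set A : Finset (Fin r) := S.filter (fun a => H.Adj v a) with hA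
    set B : Finset (Fin r) := S.filter (fun a => ¬ H.Adj v a) with hB
    have hAsub : A ⊆ S := Finset.filter_subset _ _
    have hBsub : B ⊆ S := Finset.filter_subset _ _
    -- A is (t'+2)-clique-free
    have hAfree : ¬ ∃ f : Fin (t' + 2) → Fin r, Function.Injective f ∧ (∀ i, f i ∈ A) ∧
        ∀ i j, i ≠ j → H.Adj (f i) (f j) := by
      rintro ⟨f, hinj, hmem, hadj⟩
      apply hfree
      refine ⟨Fin.snoc f v, ?_, ?_, ?_⟩
      · intro a b hab
        induction a using Fin.lastCases with
        | last =>
          induction b using Fin.lastCases with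
          | last => rfl
          | cast b =>
            exfalso
            rw [Fin.snoc_last, Fin.snoc_castSucc] at hab
            have := (Finset.mem_filter.1 (hmem b)).2
            rw [← hab] at this
            exact H.irrefl this
        | cast a =>
          induction b using Fin.lastCases with
          | last =>
            exfalso
            rw [Fin.snoc_last, Fin.snoc_castSucc] at hab
            have := (Finset.mem_filter.1 (hmem a)).2
            rw [hab] at this
            exact H.irrefl this
          | cast b =>
            rw [Fin.snoc_castSucc, Fin.snoc_castSucc] at hab
            exact congrArg Fin.castSucc (hinj hab)
      · intro i
        induction i using Fin.lastCases with
        | last => rw [Fin.snoc_last]; exact hvS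
        | cast i => rw [Fin.snoc_castSucc]; exact hAsub (hmem i)
      · intro i j hij
        induction i using Fin.lastCases with
        | last =>
          induction j using Fin.lastCases with
          | last => exact absurd rfl hij
          | cast j =>
            rw [Fin.snoc_last, Fin.snoc_castSucc]
            exact (Finset.mem_filter.1 (hmem j)).2
        | cast i =>
          induction j using Fin.lastCases with
          | last =>
            rw [Fin.snoc_last, Fin.snoc_castSucc]
            exact ((Finset.mem_filter.1 (hmem i)).2).symm
          | cast j =>
            rw [Fin.snoc_castSucc, Fin.snoc_castSucc]
            exact hadj i j (by simpa [Fin.castSucc_inj] using hij)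
    obtain ⟨g', hg'⟩ := ih H hdec A hAfree
    classical
    set g : Fin r → Fin (t' + 2) :=
      fun a => if a ∈ A then (g' a).castSucc else Fin.last (t' + 1) with hg
    refine ⟨g, ?_⟩
    set xA : ℕ := ∑ a ∈ A, x a with hxA
    set xB : ℕ := ∑ a ∈ B, x a with hxB
    -- part sums
    set σ : Fin (t' + 2) → ℕ := fun p => ∑ a ∈ S.filter (fun a => g a = p), x a with hσ
    set σ' : Fin (t' + 1) → ℕ := fun p => ∑ a ∈ A.filter (fun a => g' a = p), x a with hσ'
    have hfib1 : ∀ p : Fin (t' + 1), σ p.castSucc = σ' p := by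
      intro p
      apply Finset.sum_congr _ (fun _ _ => rfl)
      ext a
      simp only [Finset.mem_filter, hg]
      constructor
      · rintro ⟨haS, hcond⟩
        by_cases haA : a ∈ A
        · rw [if_pos haA] at hcond
          exact ⟨haA, Fin.castSucc_inj.1 hcond⟩
        · rw [if_neg haA] at hcond
          exact absurd hcond.symm (Fin.castSucc_lt_last p).ne
      · rintro ⟨haA, hpa⟩
        exact ⟨hAsub haA, by rw [if_pos haA, hpa]⟩
    have hfib2 : σ (Fin.last (t' + 1)) = xB := by
      apply Finset.sum_congr _ (fun _ _ => rfl)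
      ext a
      simp only [Finset.mem_filter, hg, hB]
      constructor
      · rintro ⟨haS, hcond⟩
        by_cases haA : a ∈ A
        · rw [if_pos haA] at hcond
          exact absurd hcond (Fin.castSucc_lt_last _).ne
        · refine ⟨haS, fun hadj => haA (Finset.mem_filter.2 ⟨haS, hadj⟩)⟩
      · rintro ⟨haS, hnadj⟩
        refine ⟨haS, ?_⟩
        rw [if_neg]
        intro haA
        exact hnadj (Finset.mem_filter.1 haA).2
    have hSsum : ∑ a ∈ S, x a = xA + xB := by
      rw [hxA, hxB, hA, hB]
      exact (Finset.sum_filter_add_sum_filter_not S _ x).symm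
    have hσsum : ∑ p, σ p = xA + xB := by
      rw [hσ, Finset.sum_fiberwise S g x, hSsum]
    have hσ'sum : ∑ p, σ' p = xA := by
      rw [hσ', Finset.sum_fiberwise A g' x, hxA]
    have hσsq : ∑ p, σ p * σ p = ∑ p, σ' p * σ' p + xB * xB := by
      rw [Fin.sum_univ_castSucc (f := fun p => σ p * σ p), hfib2]
      congr 1
      exact Finset.sum_congr rfl (fun p _ => by rw [hfib1])
    -- square identities
    have hid1 := sum_ne_add_diag' σ
    have hid2 := sum_ne_add_diag' σ'
    -- RHS(S, g) = RHS(A, g') + 2 * xA * xB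
    have hRHS : ∑ p ∈ univ.filter (fun p : Fin (t' + 2) × Fin (t' + 2) => p.1 ≠ p.2),
          σ p.1 * σ p.2
        = (∑ p ∈ univ.filter (fun p : Fin (t' + 1) × Fin (t' + 1) => p.1 ≠ p.2),
          σ' p.1 * σ' p.2) + 2 * xA * xB := by
      rw [hσsum] at hid1
      rw [hσ'sum] at hid2
      rw [hσsq] at hid1
      nlinarith [hid1, hid2]
    -- LHS split and bound
    have hdv : d v = xA := by rw [hd, hxA, hA]
    have hLHS : ∑ p ∈ (S ×ˢ S).filter (fun p => H.Adj p.1 p.2), x p.1 * x p.2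
        ≤ (∑ p ∈ (A ×ˢ A).filter (fun p => H.Adj p.1 p.2), x p.1 * x p.2) + 2 * xA * xB := by
      set T := (S ×ˢ S).filter (fun p => H.Adj p.1 p.2) with hT
      have hsplit : ∑ p ∈ T, x p.1 * x p.2
          = ∑ p ∈ T.filter (fun p => p.1 ∈ A ∧ p.2 ∈ A), x p.1 * x p.2
            + ∑ p ∈ T.filter (fun p => ¬ (p.1 ∈ A ∧ p.2 ∈ A)), x p.1 * x p.2 :=
        (Finset.sum_filter_add_sum_filter_not T _ _).symm
      have hTA : T.filter (fun p => p.1 ∈ A ∧ p.2 ∈ A)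
          = (A ×ˢ A).filter (fun p => H.Adj p.1 p.2) := by
        ext p
        simp only [hT, Finset.mem_filter, Finset.mem_product]
        constructor
        · rintro ⟨⟨_, hadj⟩, h1, h2⟩; exact ⟨⟨h1, h2⟩, hadj⟩
        · rintro ⟨⟨h1, h2⟩, hadj⟩; exact ⟨⟨⟨hAsub h1, hAsub h2⟩, hadj⟩, h1, h2⟩
      -- bound the rest
      have hrest : ∑ p ∈ T.filter (fun p => ¬ (p.1 ∈ A ∧ p.2 ∈ A)), x p.1 * x p.2
          ≤ 2 * xA * xB := by
        have hsplit2 : ∑ p ∈ T.filter (fun p => ¬ (p.1 ∈ A ∧ p.2 ∈ A)), x p.1 * x p.2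
            = ∑ p ∈ (T.filter (fun p => ¬ (p.1 ∈ A ∧ p.2 ∈ A))).filter (fun p => p.1 ∈ B),
                x p.1 * x p.2
              + ∑ p ∈ (T.filter (fun p => ¬ (p.1 ∈ A ∧ p.2 ∈ A))).filter (fun p => ¬ p.1 ∈ B),
                x p.1 * x p.2 :=
          (Finset.sum_filter_add_sum_filter_not _ _ _).symm
        have hmemT : ∀ p ∈ T, p.1 ∈ S ∧ p.2 ∈ S ∧ H.Adj p.1 p.2 := by
          intro p hp
          simp only [hT, Finset.mem_filter, Finset.mem_product] at hp
          exact ⟨hp.1.1, hp.1.2, hp.2⟩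
        have hsub1 : (T.filter (fun p => ¬ (p.1 ∈ A ∧ p.2 ∈ A))).filter (fun p => p.1 ∈ B)
            ⊆ (B ×ˢ S).filter (fun p => H.Adj p.1 p.2) := by
          intro p hp
          simp only [Finset.mem_filter] at hp
          obtain ⟨⟨hpT, _⟩, hpB⟩ := hp
          obtain ⟨_, h2, hadj⟩ := hmemT p hpT
          simp only [Finset.mem_filter, Finset.mem_product]
          exact ⟨⟨hpB, h2⟩, hadj⟩
        have hsub2 : (T.filter (fun p => ¬ (p.1 ∈ A ∧ p.2 ∈ A))).filter (fun p => ¬ p.1 ∈ B)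
            ⊆ (S ×ˢ B).filter (fun p => H.Adj p.1 p.2) := by
          intro p hp
          simp only [Finset.mem_filter] at hp
          obtain ⟨⟨hpT, hnAA⟩, hp1nB⟩ := hp
          obtain ⟨h1, h2, hadj⟩ := hmemT p hpT
          have hp1A : p.1 ∈ A := by
            by_contra hc
            exact hp1nB (Finset.mem_filter.2 ⟨h1, fun hvp => hc (Finset.mem_filter.2 ⟨h1, hvp⟩)⟩)
          have hp2B : p.2 ∈ B := by
            have hp2nA : ¬ p.2 ∈ A := fun hc => hnAA ⟨hp1A, hc⟩
            exact Finset.mem_filter.2 ⟨h2, fun hvp => hp2nA (Finset.mem_filter.2 ⟨h2, hvp⟩)⟩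
          simp only [Finset.mem_filter, Finset.mem_product]
          exact ⟨⟨h1, hp2B⟩, hadj⟩
        have hB1 : ∑ p ∈ (B ×ˢ S).filter (fun p => H.Adj p.1 p.2), x p.1 * x p.2
            ≤ xA * xB := by
          rw [Finset.sum_finset_product ((B ×ˢ S).filter (fun p => H.Adj p.1 p.2)) B
            (fun u => S.filter (fun w => H.Adj u w))
            (by intro p; simp only [Finset.mem_filter, Finset.mem_product]; tauto)]
          calc ∑ u ∈ B, ∑ w ∈ S.filter (fun w => H.Adj u w), x u * x w
              = ∑ u ∈ B, x u * d u := by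
                refine Finset.sum_congr rfl (fun u _ => ?_)
                rw [hd, Finset.mul_sum]
            _ ≤ ∑ u ∈ B, x u * xA := by
                refine Finset.sum_le_sum (fun u hu => ?_)
                exact Nat.mul_le_mul_left _ (by rw [← hdv]; exact hvmax u (hBsub hu))
            _ = xA * xB := by rw [← Finset.sum_mul, ← hxB, Nat.mul_comm]
        have hB2 : ∑ p ∈ (S ×ˢ B).filter (fun p => H.Adj p.1 p.2), x p.1 * x p.2
            ≤ xA * xB := by
          rw [Finset.sum_finset_product_right ((S ×ˢ B).filter (fun p => H.Adj p.1 p.2)) B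
            (fun u => S.filter (fun w => H.Adj w u))
            (by intro p; simp only [Finset.mem_filter, Finset.mem_product]; tauto)]
          calc ∑ u ∈ B, ∑ w ∈ S.filter (fun w => H.Adj w u), x w * x u
              = ∑ u ∈ B, x u * d u := by
                refine Finset.sum_congr rfl (fun u _ => ?_)
                rw [hd, Finset.mul_sum]
                refine Finset.sum_congr ?_ (fun w _ => Nat.mul_comm _ _)
                ext w
                simp only [Finset.mem_filter]
                exact and_congr_right (fun _ => ⟨fun h => h.symm, fun h => h.symm⟩)
            _ ≤ ∑ u ∈ B, x u * xA := by
                refine Finset.sum_le_sum (fun u hu => ?_)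
                exact Nat.mul_le_mul_left _ (by rw [← hdv]; exact hvmax u (hBsub hu))
            _ = xA * xB := by rw [← Finset.sum_mul, ← hxB, Nat.mul_comm]
        calc ∑ p ∈ T.filter (fun p => ¬ (p.1 ∈ A ∧ p.2 ∈ A)), x p.1 * x p.2
            = _ + _ := hsplit2
          _ ≤ xA * xB + xA * xB := by
              gcongr
              · exact Finset.sum_le_sum_of_subset hsub1 |>.trans hB1
              · exact Finset.sum_le_sum_of_subset hsub2 |>.trans hB2
          _ = 2 * xA * xB := by ring
      rw [hsplit, hTA]
      omega
    calc ∑ p ∈ (S ×ˢ S).filter (fun p => H.Adj p.1 p.2), x p.1 * x p.2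
        ≤ (∑ p ∈ (A ×ˢ A).filter (fun p => H.Adj p.1 p.2), x p.1 * x p.2) + 2 * xA * xB := hLHS
      _ ≤ (∑ p ∈ univ.filter (fun p : Fin (t' + 1) × Fin (t' + 1) => p.1 ≠ p.2),
            σ' p.1 * σ' p.2) + 2 * xA * xB := Nat.add_le_add_right hg' _
      _ = ∑ p ∈ univ.filter (fun p : Fin (t' + 2) × Fin (t' + 2) => p.1 ≠ p.2),
            σ p.1 * σ p.2 := hRHS.symm
      _ = _ := rfl




open scoped Classical in
noncomputable def cnt {α : Type*} (H : SimpleGraph α) (a b : α) : ℕ :=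
  if H.Adj a b then 1 else 0

lemma cnt_eq_one {α : Type*} {H : SimpleGraph α} {a b : α} (h : H.Adj a b) : cnt H a b = 1 :=
  if_pos h

lemma cnt_eq_zero {α : Type*} {H : SimpleGraph α} {a b : α} (h : ¬ H.Adj a b) : cnt H a b = 0 :=
  if_neg h

lemma cnt_congr {α β : Type*} {H : SimpleGraph α} {H2 : SimpleGraph β} {a b : α} {a' b' : β}
    (h : H.Adj a b ↔ H2.Adj a' b') : cnt H a b = cnt H2 a' b' := by
  by_cases hh : H.Adj a b
  · rw [cnt_eq_one hh, cnt_eq_one (h.1 hh)]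
  · rw [cnt_eq_zero hh, cnt_eq_zero (fun hc => hh (h.2 hc))]

lemma cnt_comm {α : Type*} {H : SimpleGraph α} (a b : α) : cnt H a b = cnt H b a :=
  cnt_congr (H.adj_comm a b)

section Blowup

variable {r : ℕ} {n : Fin r → ℕ}

/-- all vertices in part `i` have the same neighbourhoods. -/
def UniformAt (n : Fin r → ℕ) (H : SimpleGraph (Σ i : Fin r, Fin (n i))) (i : Fin r) : Prop :=
  ∀ u v : Fin (n i), ∀ w : Σ i : Fin r, Fin (n i),
    H.Adj ⟨i, u⟩ w ↔ H.Adj ⟨i, v⟩ w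

noncomputable def SD {r : ℕ} (n : Fin r → ℕ) (H : SimpleGraph (Σ i : Fin r, Fin (n i))) : ℕ :=
  ∑ a : (Σ i : Fin r, Fin (n i)), ∑ b : (Σ i : Fin r, Fin (n i)), cnt H a b

lemma SD_eq_twice (H : SimpleGraph (Σ i : Fin r, Fin (n i))) :
    SD n H = 2 * H.edgeSet.ncard := by
  classical
  rw [SD]
  have hdeg : ∀ a, ∑ b, cnt H a b = H.degree a := by
    intro a
    rw [← SimpleGraph.card_neighborFinset_eq_degree, SimpleGraph.neighborFinset_eq_filter,
      Finset.card_filter]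
    refine Finset.sum_congr rfl (fun b _ => ?_)
    by_cases h : H.Adj a b
    · rw [cnt_eq_one h, if_pos h]
    · rw [cnt_eq_zero h, if_neg h]
  rw [Finset.sum_congr rfl (fun a _ => hdeg a), SimpleGraph.sum_degrees_eq_twice_card_edges]
  congr 1
  rw [Set.ncard_eq_toFinset_card']
  congr 1

lemma clone_step (t : ℕ) (H : SimpleGraph (Σ i : Fin r, Fin (n i)))
    (hHG : H ≤ completeMultipartite n) (m : Fin r) (hnm : 0 < n m) :
    ∃ H' : SimpleGraph (Σ i : Fin r, Fin (n i)), H' ≤ completeMultipartite n ∧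
      (HasCopy H' (completeGraph (Fin t)) → HasCopy H (completeGraph (Fin t))) ∧
      UniformAt n H' m ∧ (∀ j, j ≠ m → UniformAt n H j → UniformAt n H' j) ∧
      SD n H ≤ SD n H' := by
  classical
  -- the vertex in part m with maximal out-degree
  obtain ⟨us, -, hmax⟩ := Finset.exists_max_image (univ : Finset (Fin (n m)))
    (fun u => ∑ b ∈ univ.filter (fun b : (Σ i : Fin r, Fin (n i)) => ¬ b.1 = m),
      cnt H ⟨m, u⟩ b) ⟨⟨0, hnm⟩, Finset.mem_univ _⟩
  set ρ : (Σ i : Fin r, Fin (n i)) → (Σ i : Fin r, Fin (n i)) :=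
    fun a => if a.1 = m then ⟨m, us⟩ else a with hρdef
  have hρ1 : ∀ a, (ρ a).1 = a.1 := by
    intro a
    by_cases h : a.1 = m
    · rw [hρdef]; simp only [if_pos h]; exact h.symm
    · rw [hρdef]; simp only [if_neg h]
  have hρs : ∀ u : Fin (n m), ρ ⟨m, u⟩ = ⟨m, us⟩ := fun u => if_pos rfl
  have hρo : ∀ a, a.1 ≠ m → ρ a = a := fun a h => if_neg h
  set H' : SimpleGraph (Σ i : Fin r, Fin (n i)) := SimpleGraph.comap ρ H with hH'def
  have hadj' : ∀ a b, H'.Adj a b ↔ H.Adj (ρ a) (ρ b) := fun a b => Iff.rfl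
  have hH'G : H' ≤ completeMultipartite n := by
    intro a b hab
    have := hHG ((hadj' a b).1 hab)
    have h2 : (ρ a).1 ≠ (ρ b).1 := this
    rw [hρ1, hρ1] at h2
    exact h2
  refine ⟨H', hH'G, ?_, ?_, ?_, ?_⟩
  · -- copies transfer
    rintro ⟨f, hinj, hf⟩
    refine ⟨ρ ∘ f, ?_, ?_⟩
    · intro a b hab
      by_contra hne
      have hadj : H'.Adj (f a) (f b) := hf (by exact hne : (completeGraph (Fin t)).Adj a b)
      have : H.Adj (ρ (f a)) (ρ (f b)) := (hadj' _ _).1 hadj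
      rw [show ρ (f a) = ρ (f b) from hab] at this
      exact H.irrefl this
    · intro a b hab
      exact (hadj' _ _).1 (hf hab)
  · -- uniform at m
    intro u v w
    rw [hadj', hadj', hρs, hρs]
  · -- uniformity preserved
    intro j hj hu u v w
    rw [hadj', hadj', hρo ⟨j, u⟩ hj, hρo ⟨j, v⟩ hj]
    exact hu u v (ρ w)
  · -- edge count does not decrease
    set Pm := univ.filter (fun a : (Σ i : Fin r, Fin (n i)) => a.1 = m) with hPm
    set Po := univ.filter (fun a : (Σ i : Fin r, Fin (n i)) => ¬ a.1 = m) with hPo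
    have hsplit : ∀ K : SimpleGraph (Σ i : Fin r, Fin (n i)),
        SD n K = (∑ a ∈ Pm, ∑ b ∈ Pm, cnt K a b) + (∑ a ∈ Pm, ∑ b ∈ Po, cnt K a b)
          + ((∑ a ∈ Po, ∑ b ∈ Pm, cnt K a b) + ∑ a ∈ Po, ∑ b ∈ Po, cnt K a b) := by
      intro K
      rw [SD]
      rw [← Finset.sum_filter_add_sum_filter_not univ (fun a : (Σ i : Fin r, Fin (n i)) => a.1 = m)
        (fun a => ∑ b, cnt K a b)]
      congr 1
      · rw [← Finset.sum_add_distrib]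
        refine Finset.sum_congr rfl (fun a _ => ?_)
        exact (Finset.sum_filter_add_sum_filter_not univ _ _).symm
      · rw [← Finset.sum_add_distrib]
        refine Finset.sum_congr rfl (fun a _ => ?_)
        exact (Finset.sum_filter_add_sum_filter_not univ _ _).symm
    have hmm : ∀ (K : SimpleGraph (Σ i : Fin r, Fin (n i))), K ≤ completeMultipartite n →
        ∑ a ∈ Pm, ∑ b ∈ Pm, cnt K a b = 0 := by
      intro K hK
      refine Finset.sum_eq_zero (fun a ha => Finset.sum_eq_zero (fun b hb => ?_))
      apply cnt_eq_zero
      intro hadj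
      have := hK hadj
      rw [hPm, Finset.mem_filter] at ha hb
      exact this (ha.2.trans hb.2.symm)
    have hsymm : ∀ (K : SimpleGraph (Σ i : Fin r, Fin (n i))),
        ∑ a ∈ Po, ∑ b ∈ Pm, cnt K a b = ∑ a ∈ Pm, ∑ b ∈ Po, cnt K a b := by
      intro K
      rw [Finset.sum_comm]
      exact Finset.sum_congr rfl (fun a _ => Finset.sum_congr rfl (fun b _ => cnt_comm _ _))
    have hoo : ∑ a ∈ Po, ∑ b ∈ Po, cnt H' a b = ∑ a ∈ Po, ∑ b ∈ Po, cnt H a b := by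
      refine Finset.sum_congr rfl (fun a ha => Finset.sum_congr rfl (fun b hb => ?_))
      rw [hPo, Finset.mem_filter] at ha hb
      exact cnt_congr (by rw [hadj', hρo a ha.2, hρo b hb.2])
    have hmo : ∑ a ∈ Pm, ∑ b ∈ Po, cnt H a b ≤ ∑ a ∈ Pm, ∑ b ∈ Po, cnt H' a b := by
      refine Finset.sum_le_sum (fun a ha => ?_)
      rw [hPm, Finset.mem_filter] at ha
      obtain ⟨i, u⟩ := a
      have hi : i = m := ha.2
      subst hi
      have h1 : ∑ b ∈ Po, cnt H' ⟨i, u⟩ b = ∑ b ∈ Po, cnt H ⟨i, us⟩ b := by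
        refine Finset.sum_congr rfl (fun b hb => ?_)
        rw [hPo, Finset.mem_filter] at hb
        exact cnt_congr (by rw [hadj', hρs, hρo b hb.2])
      rw [h1]
      exact hmax u (Finset.mem_univ _)
    rw [hsplit H, hsplit H', hmm H hHG, hmm H' hH'G, hsymm H, hsymm H', hoo]
    omega

end Blowup


section Blowup
variable {r : ℕ} {n : Fin r → ℕ}

lemma SD_blowdown (H₀ : SimpleGraph (Fin r)) [DecidableRel H₀.Adj] :
    SD n (SimpleGraph.comap Sigma.fst H₀)
      = ∑ p ∈ (univ ×ˢ univ).filter (fun p : Fin r × Fin r => H₀.Adj p.1 p.2),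
          n p.1 * n p.2 := by
  rw [SD, Finset.sum_filter, Finset.sum_product]
  rw [← Finset.univ_sigma_univ, Finset.sum_sigma]
  refine Finset.sum_congr rfl (fun i _ => ?_)
  have hinner : ∀ u : Fin (n i),
      ∑ b ∈ (univ : Finset (Fin r)).sigma (fun j => (univ : Finset (Fin (n j)))),
        cnt (SimpleGraph.comap Sigma.fst H₀) (⟨i, u⟩ : Σ i : Fin r, Fin (n i)) b
      = ∑ j : Fin r, (n j) * cnt H₀ i j := by
    intro u
    rw [Finset.sum_sigma]
    refine Finset.sum_congr rfl (fun j _ => ?_)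
    have : ∀ v : Fin (n j), cnt (SimpleGraph.comap Sigma.fst H₀)
        (⟨i, u⟩ : Σ i : Fin r, Fin (n i)) (⟨j, v⟩ : Σ i : Fin r, Fin (n i)) = cnt H₀ i j :=
      fun v => cnt_congr SimpleGraph.comap_adj
    rw [Finset.sum_congr rfl (fun v _ => this v), Finset.sum_const, Finset.card_univ,
      Fintype.card_fin, smul_eq_mul]
  rw [Finset.sum_congr rfl (fun u _ => hinner u), Finset.sum_const,
    Finset.card_univ, Fintype.card_fin, smul_eq_mul, Finset.mul_sum]
  refine Finset.sum_congr rfl (fun j _ => ?_)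
  show n i * (n j * cnt H₀ i j) = if H₀.Adj i j then n i * n j else 0
  by_cases h : H₀.Adj i j
  · rw [cnt_eq_one h, if_pos h, mul_one]
  · rw [cnt_eq_zero h, if_neg h, mul_zero, mul_zero]

lemma regroup {s : ℕ} (x : Fin r → ℕ) (g : Fin r → Fin s) :
    ∑ p ∈ (univ ×ˢ univ : Finset (Fin r × Fin r)).filter (fun p => g p.1 ≠ g p.2),
        x p.1 * x p.2
      = ∑ p ∈ univ.filter (fun p : Fin s × Fin s => p.1 ≠ p.2),
          (∑ a ∈ univ.filter (fun a => g a = p.1), x a)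
            * (∑ a ∈ univ.filter (fun a => g a = p.2), x a) := by
  classical
  rw [← Finset.sum_fiberwise_of_maps_to
    (g := fun q : Fin r × Fin r => (g q.1, g q.2))
    (t := univ.filter (fun p : Fin s × Fin s => p.1 ≠ p.2))
    (fun q hq => by
      simp only [Finset.mem_filter, Finset.mem_univ, true_and] at hq ⊢
      exact hq.2)
    (fun q => x q.1 * x q.2)]
  refine Finset.sum_congr rfl (fun p hp => ?_)
  simp only [Finset.mem_filter, Finset.mem_univ, true_and] at hp
  have hset : ((univ ×ˢ univ : Finset (Fin r × Fin r)).filter (fun q => g q.1 ≠ g q.2)).filter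
      (fun q => (g q.1, g q.2) = p)
      = (univ.filter (fun a => g a = p.1)) ×ˢ (univ.filter (fun a => g a = p.2)) := by
    ext q
    constructor
    · intro hq
      rw [Finset.mem_filter] at hq
      obtain ⟨hq1, hq2⟩ := hq
      rw [Finset.mem_product]
      exact ⟨Finset.mem_filter.2 ⟨Finset.mem_univ _, congrArg Prod.fst hq2⟩,
        Finset.mem_filter.2 ⟨Finset.mem_univ _, congrArg Prod.snd hq2⟩⟩
    · intro hq
      rw [Finset.mem_product, Finset.mem_filter, Finset.mem_filter] at hq
      obtain ⟨⟨-, h1⟩, -, h2⟩ := hq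
      rw [Finset.mem_filter, Finset.mem_filter, Finset.mem_product]
      refine ⟨⟨⟨Finset.mem_univ _, Finset.mem_univ _⟩, ?_⟩, Prod.ext_iff.2 ⟨h1, h2⟩⟩
      rw [h1, h2]; exact hp
  rw [hset, Finset.sum_mul_sum, Finset.sum_product]

lemma uniformize (t : ℕ) (hpos : ∀ i, 0 < n i) (H : SimpleGraph (Σ i : Fin r, Fin (n i)))
    (hHG : H ≤ completeMultipartite n) :
    ∃ H' : SimpleGraph (Σ i : Fin r, Fin (n i)), H' ≤ completeMultipartite n ∧
      (HasCopy H' (completeGraph (Fin t)) → HasCopy H (completeGraph (Fin t))) ∧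
      (∀ j, UniformAt n H' j) ∧ SD n H ≤ SD n H' := by
  have key : ∀ m : ℕ, ∃ H' : SimpleGraph (Σ i : Fin r, Fin (n i)),
      H' ≤ completeMultipartite n ∧
      (HasCopy H' (completeGraph (Fin t)) → HasCopy H (completeGraph (Fin t))) ∧
      (∀ j : Fin r, (j : ℕ) < m → UniformAt n H' j) ∧ SD n H ≤ SD n H' := by
    intro m
    induction m with
    | zero => exact ⟨H, hHG, id, fun j hj => absurd hj (by omega), le_refl _⟩
    | succ m ih =>
      obtain ⟨H₁, h₁G, h₁copy, h₁unif, h₁SD⟩ := ih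
      by_cases hm : m < r
      · obtain ⟨H₂, h₂G, h₂copy, h₂unifm, h₂unifo, h₂SD⟩ :=
          clone_step t H₁ h₁G ⟨m, hm⟩ (hpos _)
        refine ⟨H₂, h₂G, fun hc => h₁copy (h₂copy hc), ?_, le_trans h₁SD h₂SD⟩
        intro j hj
        by_cases hjm : j = ⟨m, hm⟩
        · subst hjm; exact h₂unifm
        · refine h₂unifo j hjm (h₁unif j ?_)
          have : (j : ℕ) ≠ m := fun h => hjm (Fin.ext h)
          omega
      · refine ⟨H₁, h₁G, h₁copy, fun j hj => h₁unif j ?_, h₁SD⟩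
        have := j.isLt
        omega
  obtain ⟨H', h1, h2, h3, h4⟩ := key r
  exact ⟨H', h1, h2, fun j => h3 j j.isLt, h4⟩

lemma blowup_bound (t' : ℕ) (htr : t' + 2 ≤ r) (hpos : ∀ i, 0 < n i)
    (H : SimpleGraph (Σ i : Fin r, Fin (n i))) (hHG : H ≤ completeMultipartite n)
    (hfree : ¬ HasCopy H (completeGraph (Fin (t' + 2)))) :
    H.edgeSet.ncard ≤ fT (t' + 2) n := by
  classical
  obtain ⟨H', h'G, h'copy, h'unif, h'SD⟩ := uniformize (t' + 2) hpos H hHG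
  have h'free : ¬ HasCopy H' (completeGraph (Fin (t' + 2))) := fun hc => hfree (h'copy hc)
  -- the quotient graph
  set c0 : ∀ i : Fin r, Fin (n i) := fun i => ⟨0, hpos i⟩ with hc0
  set H₀ : SimpleGraph (Fin r) :=
    { Adj := fun i j => H'.Adj ⟨i, c0 i⟩ ⟨j, c0 j⟩
      symm := ⟨fun i j h => H'.adj_symm h⟩
      loopless := ⟨fun i h => H'.irrefl h⟩ } with hH₀
  haveI hdec : DecidableRel H₀.Adj := Classical.decRel _
  have huniv : ∀ (a b : Σ i : Fin r, Fin (n i)), H'.Adj a b ↔ H₀.Adj a.1 b.1 := by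
    rintro ⟨i, u⟩ ⟨j, v⟩
    calc H'.Adj ⟨i, u⟩ ⟨j, v⟩ ↔ H'.Adj ⟨i, c0 i⟩ ⟨j, v⟩ := h'unif i u (c0 i) ⟨j, v⟩
      _ ↔ H'.Adj ⟨j, v⟩ ⟨i, c0 i⟩ := H'.adj_comm _ _
      _ ↔ H'.Adj ⟨j, c0 j⟩ ⟨i, c0 i⟩ := h'unif j v (c0 j) ⟨i, c0 i⟩
      _ ↔ H'.Adj ⟨i, c0 i⟩ ⟨j, c0 j⟩ := H'.adj_comm _ _
      _ ↔ H₀.Adj i j := Iff.rfl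
  have hHeq : H' = SimpleGraph.comap Sigma.fst H₀ := by
    apply SimpleGraph.ext
    ext a b
    rw [SimpleGraph.comap_adj]
    exact huniv a b
  have hfree₀ : ¬ ∃ f : Fin (t' + 2) → Fin r, Function.Injective f ∧
      (∀ i, f i ∈ (univ : Finset (Fin r))) ∧ ∀ i j, i ≠ j → H₀.Adj (f i) (f j) := by
    rintro ⟨f, hinj, -, hadj⟩
    apply h'free
    refine ⟨fun k => ⟨f k, c0 (f k)⟩, ?_, ?_⟩
    · intro a b hab
      exact hinj (congrArg Sigma.fst hab)
    · intro a b hab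
      exact (huniv _ _).2 (hadj a b hab)
  obtain ⟨g, hg⟩ := weighted_turan n t' H₀ hdec univ hfree₀
  obtain ⟨g2, hg2surj, hg2⟩ := surjectivize n (Nat.succ_pos t') (by omega)
    ((univ.filter (fun p => ∀ a, g a ≠ p)).card) g (le_refl _)
  have hSDle : SD n H' ≤ 2 * pairProdSum n g2 := by
    rw [hHeq, SD_blowdown]
    calc ∑ p ∈ (univ ×ˢ univ).filter (fun p : Fin r × Fin r => H₀.Adj p.1 p.2), n p.1 * n p.2
        ≤ ∑ p ∈ univ.filter (fun p : Fin (t' + 1) × Fin (t' + 1) => p.1 ≠ p.2),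
            (∑ a ∈ univ.filter (fun a => g a = p.1), n a)
              * (∑ a ∈ univ.filter (fun a => g a = p.2), n a) := hg
      _ ≤ ∑ p ∈ univ.filter (fun p : Fin (t' + 1) × Fin (t' + 1) => p.1 ≠ p.2),
            (∑ a ∈ univ.filter (fun a => g2 a = p.1), n a)
              * (∑ a ∈ univ.filter (fun a => g2 a = p.2), n a) := hg2
      _ = 2 * pairProdSum n g2 := by
          rw [pairProdSum]
          exact sum_ne_eq_two_mul_lt (fun p => partSum n g2 p)
  have hmem : pairProdSum n g2 ≤ fT (t' + 2) n := by
    rw [fT]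
    exact Finset.le_sup (Finset.mem_filter.2 ⟨Finset.mem_univ _, hg2surj⟩)
  have := SD_eq_twice H
  have := SD_eq_twice H'
  omega

end Blowup

/-- Bollobás–Erdős–Straus: for `r ≥ t ≥ 2` and positive part sizes,
`ex(K_{n_1,…,n_r}, K_t) = f_t(n_1,…,n_r)`. -/
theorem stmt_0 (r t : ℕ) (ht : 2 ≤ t) (htr : t ≤ r) (n : Fin r → ℕ)
    (hpos : ∀ i, 0 < n i) :
    exNum (completeMultipartite n) (completeGraph (Fin t)) = fT t n := by
  classical
  obtain ⟨t', rfl⟩ : ∃ t', t = t' + 2 := ⟨t - 2, by omega⟩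
  -- the lower-bound construction for a surjection g
  have hcount : ∀ g : Fin r → Fin (t' + 1),
      ∃ Hg : SimpleGraph (Σ i : Fin r, Fin (n i)), Hg ≤ completeMultipartite n ∧
        ¬ HasCopy Hg (completeGraph (Fin (t' + 2))) ∧
        Hg.edgeSet.ncard = pairProdSum n g := by
    intro g
    set H₀ : SimpleGraph (Fin r) := SimpleGraph.comap g ⊤ with hH₀
    set Hg : SimpleGraph (Σ i : Fin r, Fin (n i)) := SimpleGraph.comap Sigma.fst H₀ with hHg
    haveI : DecidableRel H₀.Adj := Classical.decRel _
    have hadj : ∀ a b : (Σ i : Fin r, Fin (n i)), Hg.Adj a b ↔ g a.1 ≠ g b.1 := fun a b => Iff.rfl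
    refine ⟨Hg, ?_, ?_, ?_⟩
    · intro a b hab
      have : g a.1 ≠ g b.1 := (hadj a b).1 hab
      exact fun h => this (by rw [h] : g a.1 = g b.1)
    · rintro ⟨f, hinj, hf⟩
      have hinj2 : Function.Injective (fun k : Fin (t' + 2) => g ((f k).1)) := by
        intro a b hab
        by_contra hne
        have : Hg.Adj (f a) (f b) := hf (by exact hne : (completeGraph (Fin (t' + 2))).Adj a b)
        exact ((hadj _ _).1 this) hab
      have := Fintype.card_le_of_injective _ hinj2
      simp only [Fintype.card_fin] at this
      omega
    · have h2 : 2 * Hg.edgeSet.ncard = 2 * pairProdSum n g := by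
        rw [← SD_eq_twice, hHg, SD_blowdown]
        have hsets : (univ ×ˢ univ).filter (fun p : Fin r × Fin r => H₀.Adj p.1 p.2)
            = (univ ×ˢ univ).filter (fun p : Fin r × Fin r => g p.1 ≠ g p.2) := by
          ext p
          simp only [Finset.mem_filter, hH₀, SimpleGraph.comap_adj, SimpleGraph.top_adj]
        rw [hsets, regroup, pairProdSum]
        exact sum_ne_eq_two_mul_lt (fun p => partSum n g p)
      omega
  -- a surjection attaining the sup
  have hsurj_ex : ∃ g : Fin r → Fin (t' + 1), Function.Surjective g := by
    refine ⟨fun i => ⟨min i.1 t', by omega⟩, fun p => ?_⟩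
    refine ⟨⟨p.1, by omega⟩, ?_⟩
    have : min p.1 t' = p.1 := by have := p.isLt; omega
    exact Fin.ext this
  have hne : (Finset.univ.filter
      (fun g : Fin r → Fin (t' + 2 - 1) => Function.Surjective g)).Nonempty := by
    obtain ⟨g, hg⟩ := hsurj_ex
    exact ⟨g, Finset.mem_filter.2 ⟨Finset.mem_univ _, hg⟩⟩
  obtain ⟨g₀, hg₀mem, hg₀⟩ := Finset.exists_mem_eq_sup _ hne (fun g => pairProdSum n g)
  have hg₀fT : fT (t' + 2) n = pairProdSum n g₀ := by rw [fT]; exact hg₀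
  obtain ⟨Hg, hHgle, hHgfree, hHgcard⟩ := hcount g₀
  have hmemM : fT (t' + 2) n ∈ {m | ∃ H, H ≤ completeMultipartite n ∧
      ¬ HasCopy H (completeGraph (Fin (t' + 2))) ∧ m = H.edgeSet.ncard} :=
    ⟨Hg, hHgle, hHgfree, by rw [hHgcard, hg₀fT]⟩
  have hub : ∀ m ∈ {m | ∃ H, H ≤ completeMultipartite n ∧
      ¬ HasCopy H (completeGraph (Fin (t' + 2))) ∧ m = H.edgeSet.ncard}, m ≤ fT (t' + 2) n := by
    rintro m ⟨H, hle, hfree, rfl⟩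
    exact blowup_bound t' htr hpos H hle hfree
  rw [exNum]
  exact le_antisymm (csSup_le ⟨_, hmemM⟩ hub) (le_csSup ⟨fT (t' + 2) n, hub⟩ hmemM)
end

section
/- For any integers r ≥ 2 and 1 ≤ k ≤ n_1 ≤ n_2 ≤ ... ≤ n_r, ex(K_{n_1,...,n_r}, kK_r) = Σ_{1 ≤ i < j ≤ r} n_i n_j − n_1 n_2 + (k−1) n_2. -/
open SimpleGraph Finset

set_option linter.unusedSectionVars false
attribute [local instance 10] Classical.propDecidable

lemma card_filter_iff {α : Type*} [Fintype α] {p q : α → Prop}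
    (hp : DecidablePred p) (hq : DecidablePred q) (h : ∀ a, p a ↔ q a) :
    #(@Finset.filter _ p hp univ) = #(@Finset.filter _ q hq univ) := by
  apply congrArg
  ext a
  simp only [Finset.mem_filter, h]

lemma card_filter_add_not {α : Type*} [Fintype α] (p : α → Prop)
    (h1 : DecidablePred p) (h2 : DecidablePred (fun a => ¬ p a)) :
    #(@Finset.filter _ p h1 univ) + #(@Finset.filter _ (fun a => ¬ p a) h2 univ)
      = Fintype.card α := by
  have hdisj : Disjoint (@Finset.filter _ p h1 univ) (@Finset.filter _ (fun a => ¬ p a) h2 univ) := by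
    rw [Finset.disjoint_left]
    intro a ha hb
    rw [Finset.mem_filter] at ha hb
    exact hb.2 ha.2
  have hunion : (@Finset.filter _ p h1 univ) ∪ (@Finset.filter _ (fun a => ¬ p a) h2 univ) = univ := by
    ext a
    simp only [Finset.mem_union, Finset.mem_filter, Finset.mem_univ, true_and, iff_true]
    exact em (p a)
  rw [← Finset.card_union_of_disjoint hdisj, hunion, Finset.card_univ]



lemma card_filter_and_not {α : Type*} [Fintype α] (p q : α → Prop)
    (h1 : DecidablePred fun a => p a ∧ q a) (h2 : DecidablePred fun a => p a ∧ ¬ q a)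
    (h3 : DecidablePred p) :
    #(@Finset.filter _ (fun a => p a ∧ q a) h1 univ)
      + #(@Finset.filter _ (fun a => p a ∧ ¬ q a) h2 univ)
      = #(@Finset.filter _ p h3 univ) := by
  have hdisj : Disjoint (@Finset.filter _ (fun a => p a ∧ q a) h1 univ)
      (@Finset.filter _ (fun a => p a ∧ ¬ q a) h2 univ) := by
    rw [Finset.disjoint_left]
    intro a ha hb
    rw [Finset.mem_filter] at ha hb
    exact hb.2.2 ha.2.2
  have hunion : (@Finset.filter _ (fun a => p a ∧ q a) h1 univ)
      ∪ (@Finset.filter _ (fun a => p a ∧ ¬ q a) h2 univ) = (@Finset.filter _ p h3 univ) := by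
    ext a
    simp only [Finset.mem_union, Finset.mem_filter, Finset.mem_univ, true_and]
    rcases em (q a) with h | h <;> tauto
  rw [← Finset.card_union_of_disjoint hdisj, hunion]

section Emb
variable {ι : Type*} [Fintype ι] [DecidableEq ι] {m : ι → ℕ} {s : ℕ}

def swapAt (p : ι) (u u' : Fin (m p)) (F : ∀ i, Fin s ↪ Fin (m i)) :
    ∀ i, Fin s ↪ Fin (m i) :=
  Function.update F p ((F p).trans (Equiv.swap u u').toEmbedding)

lemma swapAt_apply_p (p : ι) (u u' : Fin (m p)) (F : ∀ i, Fin s ↪ Fin (m i)) (j : Fin s) :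
    swapAt p u u' F p j = Equiv.swap u u' (F p j) := by
  simp [swapAt]

lemma swapAt_apply_ne (p : ι) (u u' : Fin (m p)) (F : ∀ i, Fin s ↪ Fin (m i))
    {q : ι} (hq : q ≠ p) : swapAt p u u' F q = F q := by
  simp [swapAt, Function.update_of_ne hq]

lemma swapAt_involutive (p : ι) (u u' : Fin (m p)) (F : ∀ i, Fin s ↪ Fin (m i)) :
    swapAt p u u' (swapAt p u u' F) = F := by
  funext i
  by_cases hi : i = p
  · subst hi
    apply Function.Embedding.ext
    intro j
    rw [swapAt_apply_p, swapAt_apply_p]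
    exact Equiv.swap_apply_self _ _ _
  · rw [swapAt_apply_ne _ _ _ _ hi, swapAt_apply_ne _ _ _ _ hi]

lemma emb_update_const (p : ι) (j : Fin s) (u u' : Fin (m p))
    (Q : (∀ i, Fin s ↪ Fin (m i)) → Prop) [DecidablePred Q]
    (hQ : ∀ F (g : Fin s ↪ Fin (m p)), Q (Function.update F p g) ↔ Q F) :
    #(univ.filter fun F : ∀ i, Fin s ↪ Fin (m i) => F p j = u ∧ Q F)
      = #(univ.filter fun F : ∀ i, Fin s ↪ Fin (m i) => F p j = u' ∧ Q F) := by
  apply Finset.card_nbij' (swapAt p u u') (swapAt p u u')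
  · intro F hF
    simp only [Finset.mem_coe, mem_filter, mem_univ, true_and] at hF ⊢
    refine ⟨?_, ?_⟩
    · rw [swapAt_apply_p, hF.1, Equiv.swap_apply_left]
    · rw [swapAt, hQ]
      exact hF.2
  · intro F hF
    simp only [Finset.mem_coe, mem_filter, mem_univ, true_and] at hF ⊢
    refine ⟨?_, ?_⟩
    · rw [swapAt_apply_p, hF.1, Equiv.swap_apply_right]
    · rw [swapAt, hQ]
      exact hF.2
  · intro F _
    exact swapAt_involutive p u u' F
  · intro F _
    exact swapAt_involutive p u u' F

lemma emb_pair_count (p q : ι) (hpq : p ≠ q) (j : Fin s) (u : Fin (m p)) (w : Fin (m q)) :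
    (m p) * (m q) * #(univ.filter fun F : ∀ i, Fin s ↪ Fin (m i) => F p j = u ∧ F q j = w)
      = #(univ : Finset (∀ i, Fin s ↪ Fin (m i))) := by
  classical
  have hconst : ∀ (u' : Fin (m p)) (w' : Fin (m q)),
      #(univ.filter fun F : ∀ i, Fin s ↪ Fin (m i) => F p j = u' ∧ F q j = w')
        = #(univ.filter fun F : ∀ i, Fin s ↪ Fin (m i) => F p j = u ∧ F q j = w) := by
    intro u' w'
    have step1 : #(univ.filter fun F : ∀ i, Fin s ↪ Fin (m i) => F p j = u' ∧ F q j = w')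
        = #(univ.filter fun F : ∀ i, Fin s ↪ Fin (m i) => F p j = u ∧ F q j = w') :=
      emb_update_const p j u' u (fun F => F q j = w')
        (fun F g => by simp [Function.update_of_ne (Ne.symm hpq)])
    have step2 : #(univ.filter fun F : ∀ i, Fin s ↪ Fin (m i) => F q j = w' ∧ F p j = u)
        = #(univ.filter fun F : ∀ i, Fin s ↪ Fin (m i) => F q j = w ∧ F p j = u) :=
      emb_update_const q j w' w (fun F => F p j = u)
        (fun F g => by simp [Function.update_of_ne hpq])
    have e1 : #(univ.filter fun F : ∀ i, Fin s ↪ Fin (m i) => F p j = u ∧ F q j = w')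
        = #(univ.filter fun F : ∀ i, Fin s ↪ Fin (m i) => F q j = w' ∧ F p j = u) :=
      card_filter_iff _ _ (fun F => and_comm)
    have e2 : #(univ.filter fun F : ∀ i, Fin s ↪ Fin (m i) => F q j = w ∧ F p j = u)
        = #(univ.filter fun F : ∀ i, Fin s ↪ Fin (m i) => F p j = u ∧ F q j = w) :=
      card_filter_iff _ _ (fun F => and_comm)
    rw [step1, e1, step2, e2]
  have hN : #(univ : Finset (∀ i, Fin s ↪ Fin (m i)))
      = ∑ uw ∈ (univ : Finset (Fin (m p) × Fin (m q))),
          #(univ.filter fun F : ∀ i, Fin s ↪ Fin (m i) => (F p j, F q j) = uw) :=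
    Finset.card_eq_sum_card_fiberwise (fun F _ => mem_univ _)
  have hfib : ∀ uw : Fin (m p) × Fin (m q),
      #(univ.filter fun F : ∀ i, Fin s ↪ Fin (m i) => (F p j, F q j) = uw)
        = #(univ.filter fun F : ∀ i, Fin s ↪ Fin (m i) => F p j = u ∧ F q j = w) := by
    intro uw
    refine Eq.trans (card_filter_iff _ _ (fun F => ?_)) (hconst uw.1 uw.2)
    rw [Prod.ext_iff]
  rw [hN, Finset.sum_congr rfl (fun uw _ => hfib uw), Finset.sum_const, Finset.card_univ,
    Fintype.card_prod, Fintype.card_fin, Fintype.card_fin, smul_eq_mul, mul_assoc]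

end Emb

section Aux

variable {r : ℕ} {n : Fin r → ℕ}

lemma crossAdj_card (W : SimpleGraph (Σ i : Fin r, Fin (n i))) :
    #(univ.filter fun z : (Σ i : Fin r, Fin (n i)) × (Σ i : Fin r, Fin (n i)) =>
        z.1.1 < z.2.1 ∧ W.Adj z.1 z.2)
      = ∑ pq ∈ univ.filter (fun pq : Fin r × Fin r => pq.1 < pq.2),
          #(univ.filter fun ab : Fin (n pq.1) × Fin (n pq.2) =>
            W.Adj ⟨pq.1, ab.1⟩ ⟨pq.2, ab.2⟩) := by
  classical
  rw [Finset.card_eq_sum_card_fiberwise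
    (f := fun z : (Σ i : Fin r, Fin (n i)) × (Σ i : Fin r, Fin (n i)) => (z.1.1, z.2.1))
    (t := univ.filter fun pq : Fin r × Fin r => pq.1 < pq.2)
    (fun z hz => by simp only [Finset.mem_coe, mem_filter, mem_univ, true_and] at hz ⊢; exact hz.1)]
  refine Finset.sum_congr rfl ?_
  intro pq hpq
  simp only [mem_filter, mem_univ, true_and] at hpq
  rw [Finset.filter_filter]
  symm
  apply Finset.card_bij (fun ab _ => ((⟨pq.1, ab.1⟩, ⟨pq.2, ab.2⟩) :
    (Σ i : Fin r, Fin (n i)) × (Σ i : Fin r, Fin (n i))))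
  · intro ab hab
    simp only [mem_filter, mem_univ, true_and] at hab ⊢
    exact ⟨⟨hpq, hab⟩, by simp⟩
  · intro a ha b hb h
    simp only [Prod.mk.injEq, Sigma.mk.inj_iff, heq_eq_eq, true_and] at h
    exact Prod.ext h.1 h.2
  · rintro ⟨⟨x, a⟩, ⟨y, b⟩⟩ hz
    simp only [mem_filter, mem_univ, true_and] at hz
    obtain ⟨⟨hlt, hadj⟩, heq⟩ := hz
    obtain ⟨p, q⟩ := pq
    simp only [Prod.mk.injEq] at heq
    obtain ⟨rfl, rfl⟩ := heq
    exact ⟨(a, b), by simpa using hadj, rfl⟩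

lemma crossPairs_card :
    #(univ.filter fun z : (Σ i : Fin r, Fin (n i)) × (Σ i : Fin r, Fin (n i)) =>
        z.1.1 < z.2.1)
      = ∑ pq ∈ univ.filter (fun pq : Fin r × Fin r => pq.1 < pq.2), n pq.1 * n pq.2 := by
  classical
  refine Eq.trans ?_ (Eq.trans
    (crossAdj_card (n := n) (completeMultipartiteGraph fun i => Fin (n i))) ?_)
  · apply card_filter_iff
    intro z
    simp only [comap_adj, top_adj]
    exact ⟨fun h => ⟨h, ne_of_lt h⟩, fun h => h.1⟩
  · refine Finset.sum_congr rfl ?_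
    intro pq hpq
    simp only [mem_filter, mem_univ, true_and] at hpq
    refine Eq.trans (card_filter_iff _ (fun _ => (inferInstance : Decidable True))
      (q := fun _ : Fin (n pq.1) × Fin (n pq.2) => True) ?_) ?_
    · intro ab
      simp only [comap_adj, top_adj, iff_true]
      exact ne_of_lt hpq
    · rw [Finset.filter_true]
      simp [Finset.card_univ]

lemma edge_count (W : SimpleGraph (Σ i : Fin r, Fin (n i)))
    (hW : W ≤ completeMultipartiteGraph (fun i => Fin (n i))) :
    W.edgeSet.ncard
      = #(univ.filter fun z : (Σ i : Fin r, Fin (n i)) × (Σ i : Fin r, Fin (n i)) =>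
          z.1.1 < z.2.1 ∧ W.Adj z.1 z.2) := by
  classical
  rw [Set.ncard_eq_toFinset_card']
  symm
  apply Finset.card_bij (fun z _ => Sym2.mk z.1 z.2)
  · intro z hz
    simp only [mem_filter, mem_univ, true_and] at hz
    simp only [Set.mem_toFinset, mem_edgeSet]
    exact hz.2
  · intro a ha b hb h
    simp only [mem_filter, mem_univ, true_and] at ha hb
    rw [Sym2.mk_eq_mk_iff] at h
    rcases h with h | h
    · exact h
    · exfalso
      have h1 : a.1 = b.2 := congrArg Prod.fst h
      have h2 : a.2 = b.1 := congrArg Prod.snd h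
      rw [h1, h2] at ha
      exact absurd hb.1 (asymm ha.1)
  · intro e he
    simp only [Set.mem_toFinset] at he
    induction e with
    | _ x y =>
      have hadj : W.Adj x y := he
      have hne : x.1 ≠ y.1 := by
        have := hW hadj
        simpa using this
      rcases lt_trichotomy x.1 y.1 with h | h | h
      · exact ⟨(x, y), by simp [hadj, h], rfl⟩
      · exact absurd h hne
      · exact ⟨(y, x), by simp [hadj.symm, h], Sym2.eq_swap⟩

end Aux

section Upper

variable {r k : ℕ} {n : Fin r → ℕ}

lemma upper_bound (hmono : Monotone n) (hk : 1 ≤ k) (i0 i1 : Fin r)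
    (hi0le : ∀ i, i0 ≤ i) (hi01 : i0 < i1) (hi1le : ∀ p q : Fin r, p < q → i1 ≤ q)
    (hkn : k ≤ n i0)
    (H : SimpleGraph (Σ i : Fin r, Fin (n i)))
    (hH : H ≤ completeMultipartiteGraph (fun i => Fin (n i)))
    (hno : ¬ HasCopy H (kCliques k r)) :
    H.edgeSet.ncard + n i0 * n i1
      ≤ (∑ pq ∈ univ.filter (fun pq : Fin r × Fin r => pq.1 < pq.2), n pq.1 * n pq.2)
          + (k - 1) * n i1 := by
  classical
  -- the family of systems of disjoint transversals
  set N : ℕ := #(univ : Finset (∀ i : Fin r, Fin (n i0) ↪ Fin (n i))) with hN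
  clear_value N
  have hNpos : 0 < N := by
    rw [hN, Finset.card_pos]
    exact ⟨fun i => Fin.castLEEmb (hmono (hi0le i)), mem_univ _⟩
  have hn0pos : 0 < n i0 := lt_of_lt_of_le hk hkn
  -- step 1 : at most k-1 classes of any family are uncovered (i.e. form cliques)
  have hS1 : ∀ F : (∀ i : Fin r, Fin (n i0) ↪ Fin (n i)),
      #(univ.filter fun j : Fin (n i0) =>
        ¬ ∃ p q : Fin r, p < q ∧ ¬ H.Adj ⟨p, F p j⟩ ⟨q, F q j⟩) ≤ k - 1 := by
    intro F
    by_contra hcon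
    have hk' : k ≤ #(univ.filter fun j : Fin (n i0) =>
        ¬ ∃ p q : Fin r, p < q ∧ ¬ H.Adj ⟨p, F p j⟩ ⟨q, F q j⟩) := by omega
    obtain ⟨T, hTsub, hTcard⟩ := Finset.exists_subset_card_eq hk'
    have hTadj : ∀ j ∈ T, ∀ p q : Fin r, p < q → H.Adj ⟨p, F p j⟩ ⟨q, F q j⟩ := by
      intro j hj
      have := hTsub hj
      simp only [mem_filter, mem_univ, true_and] at this
      push_neg at this
      exact this
    set e : Fin k ≃ {x // x ∈ T} := (Finset.equivFinOfCardEq hTcard).symm with he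
    apply hno
    refine ⟨fun ci => ⟨ci.2, F ci.2 ((e ci.1 : {x // x ∈ T}) : Fin (n i0))⟩, ?_, ?_⟩
    · rintro ⟨a1, a2⟩ ⟨b1, b2⟩ hab
      obtain ⟨h1, h2⟩ := Sigma.mk.inj_iff.mp hab
      dsimp only at h1 h2 ⊢
      subst h1
      have h3 : F a2 ((e a1 : {x // x ∈ T}) : Fin (n i0))
          = F a2 ((e b1 : {x // x ∈ T}) : Fin (n i0)) := eq_of_heq h2
      have h4 := (F a2).injective h3
      have h5 : e a1 = e b1 := Subtype.ext h4
      have h6 : a1 = b1 := e.injective h5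
      rw [h6]
    · rintro ⟨a1, a2⟩ ⟨b1, b2⟩ hab
      rw [kCliques, fromRel_adj] at hab
      obtain ⟨hne, hc⟩ := hab
      have hc1 : a1 = b1 := by tauto
      subst hc1
      have hc2 : a2 ≠ b2 := by
        intro h
        rw [h] at hne
        exact hne rfl
      dsimp only
      have hmem : ((e a1 : {x // x ∈ T}) : Fin (n i0)) ∈ T := (e a1).2
      rcases lt_trichotomy a2 b2 with h | h | h
      · exact hTadj _ hmem a2 b2 h
      · exact absurd h hc2
      · exact (hTadj _ hmem b2 a2 h).symm
  -- the covered incidence count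
  set C : ℕ := #(univ.filter fun Fj : (∀ i : Fin r, Fin (n i0) ↪ Fin (n i)) × Fin (n i0) =>
      ∃ p q : Fin r, p < q ∧ ¬ H.Adj ⟨p, Fj.1 p Fj.2⟩ ⟨q, Fj.1 q Fj.2⟩) with hC
  clear_value C
  -- step 2 : n i0 * N ≤ C + (k-1) * N
  have hS2 : n i0 * N ≤ C + (k - 1) * N := by
    have hfib : C = ∑ F ∈ (univ : Finset (∀ i : Fin r, Fin (n i0) ↪ Fin (n i))),
        #(univ.filter fun j : Fin (n i0) =>
          ∃ p q : Fin r, p < q ∧ ¬ H.Adj ⟨p, F p j⟩ ⟨q, F q j⟩) := by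
      rw [hC, Finset.card_eq_sum_card_fiberwise
        (f := fun Fj : (∀ i : Fin r, Fin (n i0) ↪ Fin (n i)) × Fin (n i0) => Fj.1)
        (t := univ) (fun _ _ => mem_univ _)]
      refine Finset.sum_congr rfl ?_
      intro F _
      apply Finset.card_bij (fun Fj _ => Fj.2)
      · intro Fj hFj
        simp only [mem_filter, mem_univ, true_and] at hFj ⊢
        obtain ⟨h1, h2⟩ := hFj
        rw [h2] at h1
        exact h1
      · intro a ha b hb h
        simp only [mem_filter, mem_univ, true_and] at ha hb
        exact Prod.ext (ha.2.trans hb.2.symm) h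
      · intro j hj
        simp only [mem_filter, mem_univ, true_and] at hj
        exact ⟨(F, j), by simp [hj], rfl⟩
    have hsplit : ∀ F : (∀ i : Fin r, Fin (n i0) ↪ Fin (n i)),
        n i0 ≤ #(univ.filter fun j : Fin (n i0) =>
          ∃ p q : Fin r, p < q ∧ ¬ H.Adj ⟨p, F p j⟩ ⟨q, F q j⟩) + (k - 1) := by
      intro F
      have h2 : #(univ.filter fun j : Fin (n i0) =>
            ∃ p q : Fin r, p < q ∧ ¬ H.Adj ⟨p, F p j⟩ ⟨q, F q j⟩)
          + #(univ.filter fun j : Fin (n i0) =>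
            ¬ ∃ p q : Fin r, p < q ∧ ¬ H.Adj ⟨p, F p j⟩ ⟨q, F q j⟩) = n i0 :=
        (card_filter_add_not _ _ _).trans (Fintype.card_fin _)
      have h1 := hS1 F
      clear hfib hS1
      omega
    calc n i0 * N = ∑ _F ∈ (univ : Finset (∀ i : Fin r, Fin (n i0) ↪ Fin (n i))), n i0 := by
          rw [Finset.sum_const, hN, smul_eq_mul, mul_comm]
      _ ≤ ∑ F ∈ (univ : Finset (∀ i : Fin r, Fin (n i0) ↪ Fin (n i))),
            (#(univ.filter fun j : Fin (n i0) =>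
              ∃ p q : Fin r, p < q ∧ ¬ H.Adj ⟨p, F p j⟩ ⟨q, F q j⟩) + (k - 1)) :=
          Finset.sum_le_sum (fun F _ => hsplit F)
      _ = C + (k - 1) * N := by
          rw [Finset.sum_add_distrib, Finset.sum_const, ← hfib, hN, smul_eq_mul, mul_comm]
  -- the missing pairs
  set M : Finset ((Σ i : Fin r, Fin (n i)) × (Σ i : Fin r, Fin (n i))) :=
    univ.filter fun z => z.1.1 < z.2.1 ∧ ¬ H.Adj z.1 z.2 with hM
  -- step 3 : C is at most the sum over missing pairs of hitting counts
  have hS3 : C ≤ ∑ z ∈ M,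
      #(univ.filter fun Fj : (∀ i : Fin r, Fin (n i0) ↪ Fin (n i)) × Fin (n i0) =>
        Fj.1 z.1.1 Fj.2 = z.1.2 ∧ Fj.1 z.2.1 Fj.2 = z.2.2) := by
    rw [hC]
    refine le_trans (Finset.card_le_card ?_) Finset.card_biUnion_le
    intro Fj hFj
    simp only [mem_filter, mem_univ, true_and] at hFj
    obtain ⟨p, q, hpq, hnadj⟩ := hFj
    rw [Finset.mem_biUnion]
    refine ⟨(⟨p, Fj.1 p Fj.2⟩, ⟨q, Fj.1 q Fj.2⟩), ?_, ?_⟩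
    · rw [hM, mem_filter]
      exact ⟨mem_univ _, hpq, hnadj⟩
    · simp
  -- step 4 : each hitting count is small
  have hS4 : ∀ z ∈ M,
      n i1 * #(univ.filter fun Fj : (∀ i : Fin r, Fin (n i0) ↪ Fin (n i)) × Fin (n i0) =>
        Fj.1 z.1.1 Fj.2 = z.1.2 ∧ Fj.1 z.2.1 Fj.2 = z.2.2) ≤ N := by
    intro z hz
    rw [hM, mem_filter] at hz
    obtain ⟨_, hlt, _⟩ := hz
    have hme1 : n i0 ≤ n z.1.1 := hmono (hi0le _)
    have hme2 : n i1 ≤ n z.2.1 := hmono (hi1le _ _ hlt)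
    have hBsum : #(univ.filter fun Fj : (∀ i : Fin r, Fin (n i0) ↪ Fin (n i)) × Fin (n i0) =>
          Fj.1 z.1.1 Fj.2 = z.1.2 ∧ Fj.1 z.2.1 Fj.2 = z.2.2)
        = ∑ j ∈ (univ : Finset (Fin (n i0))),
            #(univ.filter fun F : (∀ i : Fin r, Fin (n i0) ↪ Fin (n i)) =>
              F z.1.1 j = z.1.2 ∧ F z.2.1 j = z.2.2) := by
      rw [Finset.card_eq_sum_card_fiberwise
        (f := fun Fj : (∀ i : Fin r, Fin (n i0) ↪ Fin (n i)) × Fin (n i0) => Fj.2)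
        (t := univ) (fun _ _ => mem_univ _)]
      refine Finset.sum_congr rfl ?_
      intro j _
      apply Finset.card_bij (fun Fj _ => Fj.1)
      · intro Fj hFj
        simp only [mem_filter, mem_univ, true_and] at hFj ⊢
        obtain ⟨h1, h2⟩ := hFj
        rw [h2] at h1
        exact h1
      · intro a ha b hb h
        simp only [mem_filter, mem_univ, true_and] at ha hb
        exact Prod.ext h (ha.2.trans hb.2.symm)
      · intro F hF
        simp only [mem_filter, mem_univ, true_and] at hF
        exact ⟨(F, j), by simp [hF], rfl⟩
    have hperj : ∀ j : Fin (n i0),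
        n z.1.1 * n z.2.1 * #(univ.filter fun F : (∀ i : Fin r, Fin (n i0) ↪ Fin (n i)) =>
          F z.1.1 j = z.1.2 ∧ F z.2.1 j = z.2.2) = N := by
      intro j
      rw [hN]
      exact emb_pair_count z.1.1 z.2.1 (ne_of_lt hlt) j z.1.2 z.2.2
    have hstep : n i0 * (n i1 * #(univ.filter fun Fj :
          (∀ i : Fin r, Fin (n i0) ↪ Fin (n i)) × Fin (n i0) =>
          Fj.1 z.1.1 Fj.2 = z.1.2 ∧ Fj.1 z.2.1 Fj.2 = z.2.2)) ≤ n i0 * N := by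
      rw [hBsum, Finset.mul_sum, Finset.mul_sum]
      calc ∑ j ∈ (univ : Finset (Fin (n i0))),
            n i0 * (n i1 * #(univ.filter fun F : (∀ i : Fin r, Fin (n i0) ↪ Fin (n i)) =>
              F z.1.1 j = z.1.2 ∧ F z.2.1 j = z.2.2))
          ≤ ∑ j ∈ (univ : Finset (Fin (n i0))),
            n z.1.1 * n z.2.1 * #(univ.filter fun F : (∀ i : Fin r, Fin (n i0) ↪ Fin (n i)) =>
              F z.1.1 j = z.1.2 ∧ F z.2.1 j = z.2.2) := by
            refine Finset.sum_le_sum ?_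
            intro j _
            rw [← mul_assoc]
            exact Nat.mul_le_mul_right _ (Nat.mul_le_mul hme1 hme2)
        _ = ∑ j ∈ (univ : Finset (Fin (n i0))), N :=
            Finset.sum_congr rfl (fun j _ => hperj j)
        _ = ∑ j ∈ (univ : Finset (Fin (n i0))), n i0 * N / n i0 := by
            refine Finset.sum_congr rfl (fun j _ => ?_)
            rw [Nat.mul_div_cancel_left _ hn0pos]
        _ ≤ n i0 * N := by
            rw [Finset.sum_const, Finset.card_univ, Fintype.card_fin, smul_eq_mul,
              Nat.mul_div_cancel_left _ hn0pos]
    exact Nat.le_of_mul_le_mul_left hstep hn0pos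
  -- combine everything
  have c2 : n i1 * C ≤ #M * N := by
    calc n i1 * C ≤ n i1 * ∑ z ∈ M,
          #(univ.filter fun Fj : (∀ i : Fin r, Fin (n i0) ↪ Fin (n i)) × Fin (n i0) =>
            Fj.1 z.1.1 Fj.2 = z.1.2 ∧ Fj.1 z.2.1 Fj.2 = z.2.2) := Nat.mul_le_mul_left _ hS3
      _ = ∑ z ∈ M, n i1 *
          #(univ.filter fun Fj : (∀ i : Fin r, Fin (n i0) ↪ Fin (n i)) × Fin (n i0) =>
            Fj.1 z.1.1 Fj.2 = z.1.2 ∧ Fj.1 z.2.1 Fj.2 = z.2.2) := Finset.mul_sum _ _ _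
      _ ≤ ∑ z ∈ M, N := Finset.sum_le_sum hS4
      _ = #M * N := by rw [Finset.sum_const, smul_eq_mul]
  have c3 : n i0 * n i1 * N ≤ (#M + (k - 1) * n i1) * N := by
    calc n i0 * n i1 * N = n i1 * (n i0 * N) := by ring
      _ ≤ n i1 * (C + (k - 1) * N) := Nat.mul_le_mul_left _ hS2
      _ = n i1 * C + (k - 1) * n i1 * N := by ring
      _ ≤ #M * N + (k - 1) * n i1 * N := Nat.add_le_add_right c2 _
      _ = (#M + (k - 1) * n i1) * N := by ring
  have hfinal : n i0 * n i1 ≤ #M + (k - 1) * n i1 := Nat.le_of_mul_le_mul_right c3 hNpos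
  -- translate to edge counts
  have hPE : H.edgeSet.ncard
      = #(univ.filter fun z : (Σ i : Fin r, Fin (n i)) × (Σ i : Fin r, Fin (n i)) =>
          z.1.1 < z.2.1 ∧ H.Adj z.1 z.2) := edge_count H hH
  have hpart : #(univ.filter fun z : (Σ i : Fin r, Fin (n i)) × (Σ i : Fin r, Fin (n i)) =>
          z.1.1 < z.2.1 ∧ H.Adj z.1 z.2) + #M
      = #(univ.filter fun z : (Σ i : Fin r, Fin (n i)) × (Σ i : Fin r, Fin (n i)) =>
          z.1.1 < z.2.1) := by
    rw [hM]
    exact card_filter_and_not _ _ _ _ _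
  have hPfull : #(univ.filter fun z : (Σ i : Fin r, Fin (n i)) × (Σ i : Fin r, Fin (n i)) =>
        z.1.1 < z.2.1)
      = ∑ pq ∈ univ.filter (fun pq : Fin r × Fin r => pq.1 < pq.2), n pq.1 * n pq.2 :=
    crossPairs_card
  have hn0n1 : n i0 * n i1
      ≤ ∑ pq ∈ univ.filter (fun pq : Fin r × Fin r => pq.1 < pq.2), n pq.1 * n pq.2 := by
    have hmem : (i0, i1) ∈ univ.filter (fun pq : Fin r × Fin r => pq.1 < pq.2) := by
      simp only [mem_filter, mem_univ, true_and]
      exact hi01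
    exact Finset.single_le_sum (f := fun pq : Fin r × Fin r => n pq.1 * n pq.2)
      (fun _ _ => Nat.zero_le _) hmem
  omega

end Upper

section Extremal

variable {r : ℕ} (n : Fin r → ℕ) (k : ℕ) (i0 i1 : Fin r)

/-- The extremal graph : complete multipartite minus the edges between parts `i0` and `i1`,
except that the first `k-1` vertices of part `i0` stay joined to all of part `i1`. -/
def extremalH : SimpleGraph (Σ i : Fin r, Fin (n i)) where
  Adj x y := x.1 ≠ y.1 ∧ ¬(x.1 = i0 ∧ y.1 = i1 ∧ k - 1 ≤ (x.2 : ℕ))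
    ∧ ¬(y.1 = i0 ∧ x.1 = i1 ∧ k - 1 ≤ (y.2 : ℕ))
  symm := ⟨fun x y h => ⟨h.1.symm, h.2.2, h.2.1⟩⟩
  loopless := ⟨fun x h => h.1 rfl⟩

lemma extremalH_le : extremalH n k i0 i1 ≤ completeMultipartiteGraph (fun i => Fin (n i)) := by
  intro x y h
  exact h.1

lemma extremalH_count (h01 : i0 < i1) (hkn : k - 1 ≤ n i0) :
    (extremalH n k i0 i1).edgeSet.ncard + n i0 * n i1
      = (∑ pq ∈ univ.filter (fun pq : Fin r × Fin r => pq.1 < pq.2), n pq.1 * n pq.2)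
          + (k - 1) * n i1 := by
  classical
  rw [edge_count _ (extremalH_le n k i0 i1), crossAdj_card]
  have hmem : (i0, i1) ∈ univ.filter (fun pq : Fin r × Fin r => pq.1 < pq.2) := by
    simp only [mem_filter, mem_univ, true_and]
    exact h01
  have e3 : ∀ pq ∈ (univ.filter (fun pq : Fin r × Fin r => pq.1 < pq.2)).erase (i0, i1),
      #(univ.filter fun ab : Fin (n pq.1) × Fin (n pq.2) =>
          (extremalH n k i0 i1).Adj ⟨pq.1, ab.1⟩ ⟨pq.2, ab.2⟩) = n pq.1 * n pq.2 := by
    intro pq hpq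
    rw [Finset.mem_erase, mem_filter] at hpq
    obtain ⟨hne, _, hlt⟩ := hpq
    refine Eq.trans (card_filter_iff _ (fun _ => (inferInstance : Decidable True))
      (q := fun _ : Fin (n pq.1) × Fin (n pq.2) => True) ?_) ?_
    · intro ab
      simp only [iff_true]
      refine ⟨ne_of_lt hlt, ?_, ?_⟩
      · rintro ⟨ha, hb, -⟩
        dsimp only at ha hb
        exact hne (Prod.ext ha hb)
      · rintro ⟨ha, hb, -⟩
        dsimp only at ha hb
        rw [hb, ha] at hlt
        exact absurd h01 (asymm hlt)
    · rw [Finset.filter_true]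
      simp
  have e4 : #(univ.filter fun ab : Fin (n i0) × Fin (n i1) =>
      (extremalH n k i0 i1).Adj ⟨i0, ab.1⟩ ⟨i1, ab.2⟩) = (k - 1) * n i1 := by
    have e5 : #(univ.filter fun ab : Fin (n i0) × Fin (n i1) =>
        (extremalH n k i0 i1).Adj ⟨i0, ab.1⟩ ⟨i1, ab.2⟩)
        = #(univ.filter fun ab : Fin (n i0) × Fin (n i1) => (ab.1 : ℕ) < k - 1) := by
      apply card_filter_iff
      intro ab
      constructor
      · rintro ⟨-, h2, -⟩
        by_contra hge
        exact h2 ⟨rfl, rfl, (by omega : k - 1 ≤ (ab.1 : ℕ))⟩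
      · intro hab
        refine ⟨ne_of_lt h01, ?_, ?_⟩
        · rintro ⟨-, -, hge⟩
          have hge' : k - 1 ≤ (ab.1 : ℕ) := hge
          omega
        · rintro ⟨hb, -, -⟩
          have hb' : i1 = i0 := hb
          exact absurd hb'.symm (ne_of_lt h01)
    rw [e5]
    symm
    have : (k - 1) * n i1 = #(univ : Finset (Fin (k - 1) × Fin (n i1))) := by
      simp
    rw [this]
    apply Finset.card_bij (fun cd _ => ((⟨(cd.1 : ℕ), lt_of_lt_of_le cd.1.2 hkn⟩, cd.2) :
      Fin (n i0) × Fin (n i1)))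
    · intro cd _
      simp only [mem_filter, mem_univ, true_and]
      exact cd.1.2
    · intro a _ b _ h
      rw [Prod.ext_iff] at h ⊢
      obtain ⟨h1, h2⟩ := h
      simp only [Fin.mk.injEq] at h1
      exact ⟨Fin.ext h1, h2⟩
    · intro ab hab
      simp only [mem_filter, mem_univ, true_and] at hab
      exact ⟨(⟨(ab.1 : ℕ), hab⟩, ab.2), mem_univ _, Prod.ext (Fin.ext rfl) rfl⟩
  rw [← Finset.add_sum_erase _ _ hmem,
    ← Finset.add_sum_erase _ (fun pq : Fin r × Fin r => n pq.1 * n pq.2) hmem,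
    Finset.sum_congr rfl e3, e4]
  have e6 : n (i0, i1).1 * n (i0, i1).2 = n i0 * n i1 := rfl
  omega

end Extremal

section NoCopy

variable {r : ℕ} {n : Fin r → ℕ} {k : ℕ} {i0 i1 : Fin r}

lemma extremalH_nocopy (hk : 1 ≤ k) (h01 : i0 ≠ i1) :
    ¬ HasCopy (extremalH n k i0 i1) (kCliques k r) := by
  rintro ⟨f, hinj, hadj⟩
  have key : ∀ c : Fin k, ∃ a : Fin (n i0), (a : ℕ) < k - 1 ∧ ∃ i : Fin r, f (c, i) = ⟨i0, a⟩ := by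
    intro c
    have hψ : Function.Injective (fun i : Fin r => (f (c, i)).1) := by
      intro i i' h
      by_contra hne
      have hcl : (kCliques k r).Adj (c, i) (c, i') := by
        rw [kCliques, fromRel_adj]
        exact ⟨fun hcc => hne (congrArg Prod.snd hcc), Or.inl rfl⟩
      exact (hadj hcl).1 h
    have hsurj : Function.Surjective (fun i : Fin r => (f (c, i)).1) :=
      Finite.surjective_of_injective hψ
    obtain ⟨iA, hiA⟩ := hsurj i0
    obtain ⟨iB, hiB⟩ := hsurj i1
    have hABne : iA ≠ iB := by
      intro h
      rw [h, hiB] at hiA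
      exact h01 hiA.symm
    have hcl2 : (kCliques k r).Adj (c, iA) (c, iB) := by
      rw [kCliques, fromRel_adj]
      exact ⟨fun hcc => hABne (congrArg Prod.snd hcc), Or.inl rfl⟩
    have hadj2 := hadj hcl2
    dsimp only at hiA hiB
    rcases hfa : f (c, iA) with ⟨p, a⟩
    rcases hfb : f (c, iB) with ⟨q, b⟩
    rw [hfa] at hiA hadj2
    rw [hfb] at hiB hadj2
    dsimp only at hiA hiB
    subst hiA
    subst hiB
    have hlt : (a : ℕ) < k - 1 := by
      by_contra hge
      exact hadj2.2.1 ⟨rfl, rfl, (by omega : k - 1 ≤ (a : ℕ))⟩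
    exact ⟨a, hlt, iA, hfa⟩
  choose a ha i hfi using key
  have hainj : Function.Injective a := by
    intro c c' h
    have h2 : f (c, i c) = f (c', i c') := by
      rw [hfi, hfi, h]
    have h3 := hinj h2
    exact congrArg Prod.fst h3
  have hcard1 : Fintype.card (Fin k) ≤ Fintype.card {x : Fin (n i0) // (x : ℕ) < k - 1} := by
    apply Fintype.card_le_of_injective (fun c => ⟨a c, ha c⟩)
    intro c c' h
    exact hainj (congrArg Subtype.val h)
  have hcard2 : Fintype.card {x : Fin (n i0) // (x : ℕ) < k - 1} ≤ Fintype.card (Fin (k - 1)) := by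
    apply Fintype.card_le_of_injective (fun x => (⟨(x.1 : ℕ), x.2⟩ : Fin (k - 1)))
    intro x y h
    simp only [Fin.mk.injEq] at h
    exact Subtype.ext (Fin.ext h)
  rw [Fintype.card_fin] at hcard1
  rw [Fintype.card_fin] at hcard2
  omega

end NoCopy

/-- De Silva et al.: for `r ≥ 2` and `1 ≤ k ≤ n_1 ≤ ⋯ ≤ n_r`,
`ex(K_{n_1,…,n_r}, kK_r) = Σ_{i<j} n_i n_j − n_1 n_2 + (k−1) n_2`. -/
theorem stmt_1 (r k : ℕ) (hr : 2 ≤ r) (n : Fin r → ℕ) (hmono : Monotone n)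
    (hk : 1 ≤ k) (hkn : k ≤ n ⟨0, by omega⟩) :
    exNum (completeMultipartite n) (kCliques k r) =
      (∑ p ∈ Finset.univ.filter (fun p : Fin r × Fin r => p.1 < p.2), n p.1 * n p.2)
        - n ⟨0, by omega⟩ * n ⟨1, by omega⟩ + (k - 1) * n ⟨1, by omega⟩ := by
  classical
  have h0 : (0 : ℕ) < r := by omega
  have h1 : (1 : ℕ) < r := by omega
  show exNum (completeMultipartite n) (kCliques k r) =
      (∑ p ∈ Finset.univ.filter (fun p : Fin r × Fin r => p.1 < p.2), n p.1 * n p.2)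
        - n ⟨0, h0⟩ * n ⟨1, h1⟩ + (k - 1) * n ⟨1, h1⟩
  have hkn0 : k ≤ n ⟨0, h0⟩ := hkn
  have hi0le : ∀ i : Fin r, (⟨0, h0⟩ : Fin r) ≤ i := by
    intro i
    rw [Fin.le_def]
    exact Nat.zero_le _
  have hi01 : (⟨0, h0⟩ : Fin r) < (⟨1, h1⟩ : Fin r) := by
    rw [Fin.lt_def]
    exact Nat.zero_lt_one
  have hi1le : ∀ p q : Fin r, p < q → (⟨1, h1⟩ : Fin r) ≤ q := by
    intro p q h
    rw [Fin.lt_def] at h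
    rw [Fin.le_def]
    exact Nat.succ_le_of_lt (lt_of_le_of_lt (Nat.zero_le _) h)
  have hbound : n ⟨0, h0⟩ * n ⟨1, h1⟩
      ≤ ∑ p ∈ Finset.univ.filter (fun p : Fin r × Fin r => p.1 < p.2), n p.1 * n p.2 := by
    have hmem : ((⟨0, h0⟩, ⟨1, h1⟩) : Fin r × Fin r)
        ∈ Finset.univ.filter (fun p : Fin r × Fin r => p.1 < p.2) := by
      simp only [mem_filter, mem_univ, true_and]
      exact hi01
    exact Finset.single_le_sum (f := fun pq : Fin r × Fin r => n pq.1 * n pq.2)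
      (fun _ _ => Nat.zero_le _) hmem
  refine IsGreatest.csSup_eq ⟨?_, ?_⟩
  · refine ⟨extremalH n k ⟨0, h0⟩ ⟨1, h1⟩, extremalH_le n k _ _,
      extremalH_nocopy hk (ne_of_lt hi01), ?_⟩
    have hc := extremalH_count n k ⟨0, h0⟩ ⟨1, h1⟩ hi01 (by omega : k - 1 ≤ n ⟨0, h0⟩)
    omega
  · rintro x ⟨H, hle, hno, rfl⟩
    have hub := upper_bound hmono hk ⟨0, h0⟩ ⟨1, h1⟩ hi0le hi01 hi1le hkn0 H hle hno
    omega
end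

section
/- Let k ≥ 2 and t ≥ 3 be integers, and let n_1, n_2, ..., n_r be positive integers with r ≥ t, n_1 ≥ k, n_1 ≤ n_i for all i ≥ 2, and n = Σ_{i=1}^r n_i. Then ex(K_{n_1,...,n_r}, kK_t) ≥ (k−1)(n − n_1) + f_t(n_1−(k−1), n_2, ..., n_r). -/
open SimpleGraph Finset

lemma card_filter_sigma' {r : ℕ} (n : Fin r → ℕ) (P : (Σ i : Fin r, Fin (n i)) → Prop)
    [DecidablePred P] :
    ((univ : Finset (Σ i : Fin r, Fin (n i))).filter P).card
      = ∑ i, ((univ : Finset (Fin (n i))).filter (fun j => P ⟨i, j⟩)).card := by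
  have h : (univ : Finset (Σ i : Fin r, Fin (n i))).filter P
      = (univ : Finset (Fin r)).sigma (fun i => univ.filter fun j => P ⟨i, j⟩) := by
    ext ⟨i, j⟩; simp
  rw [h, Finset.card_sigma]

lemma card_fin_lt (m c : ℕ) (h : c < m) :
    ((univ : Finset (Fin m)).filter (fun j : Fin m => j.val < c)).card = c := by
  have : (univ : Finset (Fin m)).filter (fun j : Fin m => j.val < c)
      = Finset.Iio (⟨c, h⟩ : Fin m) := by
    ext j; simp [Fin.lt_def]
  rw [this, Fin.card_Iio]

theorem main_aux (k t r : ℕ) (hk : 2 ≤ k) (ht : 3 ≤ t) (htr : t ≤ r)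
    (n : Fin r → ℕ) (i0 : Fin r) (hkn : k ≤ n i0) :
    (k - 1) * ((∑ i, n i) - n i0) +
        fT t (Function.update n i0 (n i0 - (k - 1))) ≤
      exNum (completeMultipartite n) (kCliques k t) := by
  classical
  set x : Fin r → ℕ := Function.update n i0 (n i0 - (k - 1)) with hx
  -- there is a surjection Fin r → Fin (t-1)
  have hne : (Finset.univ.filter
      (fun g : Fin r → Fin (t - 1) => Function.Surjective g)).Nonempty := by
    refine ⟨fun i => ⟨min i.val (t - 2), by omega⟩, ?_⟩
    simp only [Finset.mem_filter, Finset.mem_univ, true_and]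
    intro b
    refine ⟨⟨b.val, by omega⟩, ?_⟩
    have hb := b.isLt
    apply Fin.ext
    simp only
    omega
  obtain ⟨g, hg, hgval⟩ := Finset.exists_mem_eq_sup _ hne
    (fun g : Fin r → Fin (t - 1) => pairProdSum x g)
  rw [show fT t x = _ from hgval]
  -- the distinguished special vertices
  set spec : (Σ i : Fin r, Fin (n i)) → Prop :=
    fun v => v.1 = i0 ∧ v.2.val < k - 1 with hspec
  set H : SimpleGraph (Σ i : Fin r, Fin (n i)) :=
    SimpleGraph.fromRel (fun u v =>
      (spec u ∧ v.1 ≠ i0) ∨ (spec v ∧ u.1 ≠ i0) ∨ (¬spec u ∧ ¬spec v ∧ g u.1 ≠ g v.1))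
    with hH
  have hHG : H ≤ completeMultipartite n := by
    intro u v huv
    rw [hH, SimpleGraph.fromRel_adj] at huv
    obtain ⟨hne', h1⟩ := huv
    show u.1 ≠ v.1
    rcases h1 with (⟨hs, hv⟩ | ⟨hs, hv⟩ | ⟨-, -, hgne⟩) | (⟨hs, hv⟩ | ⟨hs, hv⟩ | ⟨-, -, hgne⟩)
    · rw [hs.1]; exact fun h => hv h.symm
    · rw [hs.1]; exact hv
    · exact fun h => hgne (by rw [h])
    · rw [hs.1]; exact hv
    · rw [hs.1]; exact fun h => hv h.symm
    · exact fun h => hgne (by rw [h])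
  -- cardinality of the special set
  set S : Finset (Σ i : Fin r, Fin (n i)) := univ.filter spec with hS
  have hScard : S.card = k - 1 := by
    rw [hS, card_filter_sigma' n spec]
    have h1 : ∀ i : Fin r, ((univ : Finset (Fin (n i))).filter (fun j => spec ⟨i, j⟩)).card
        = if i = i0 then k - 1 else 0 := by
      intro i
      by_cases hi : i = i0
      · subst hi
        have he : ((univ : Finset (Fin (n i))).filter (fun j => spec ⟨i, j⟩))
            = univ.filter (fun j : Fin (n i) => j.val < k - 1) := by
          ext j; simp [hspec]
        rw [if_pos rfl, he, card_fin_lt _ _ (by omega)]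
      · have he : ((univ : Finset (Fin (n i))).filter (fun j => spec ⟨i, j⟩)) = ∅ := by
          ext j; simp [hspec, hi]
        rw [if_neg hi, he, Finset.card_empty]
    rw [Finset.sum_congr rfl fun i _ => h1 i, Finset.sum_ite_eq' univ i0 (fun _ => k - 1),
      if_pos (Finset.mem_univ i0)]
  -- no copy of kK_t
  have hnocopy : ¬ HasCopy H (kCliques k t) := by
    rintro ⟨f, finj, fadj⟩
    have hspecial : ∀ a : Fin k, ∃ i : Fin t, spec (f ⟨a, i⟩) := by
      intro a
      by_contra hcon
      push_neg at hcon
      have hinj : Function.Injective (fun i : Fin t => g (f ⟨a, i⟩).1) := by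
        intro i j hij
        by_contra hne'
        have hadj : H.Adj (f ⟨a, i⟩) (f ⟨a, j⟩) := by
          apply fadj
          rw [kCliques, SimpleGraph.fromRel_adj]
          exact ⟨fun h => hne' (congrArg Prod.snd h), Or.inl rfl⟩
        rw [hH, SimpleGraph.fromRel_adj] at hadj
        rcases hadj.2 with (⟨hs,-⟩|⟨hs,-⟩|⟨-,-,hg'⟩)|(⟨hs,-⟩|⟨hs,-⟩|⟨-,-,hg'⟩)
        · exact hcon i hs
        · exact hcon j hs
        · exact hg' hij
        · exact hcon j hs
        · exact hcon i hs
        · exact hg' hij.symm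
      have hcard := Fintype.card_le_of_injective _ hinj
      simp only [Fintype.card_fin] at hcard
      omega
    choose s hs' using hspecial
    have hle : (univ : Finset (Fin k)).card ≤ S.card := by
      apply Finset.card_le_card_of_injOn (fun a => f ⟨a, s a⟩)
      · intro a _
        exact Finset.mem_filter.2 ⟨Finset.mem_univ _, hs' a⟩
      · intro a _ b _ hab
        exact congrArg Prod.fst (finj hab)
    rw [Finset.card_univ, Fintype.card_fin, hScard] at hle
    omega
  -- the part of edges incident to special vertices
  have hTcard : ((univ : Finset (Σ i : Fin r, Fin (n i))).filter
      (fun v => v.1 ≠ i0)).card = (∑ i, n i) - n i0 := by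
    rw [card_filter_sigma' n (fun v => v.1 ≠ i0)]
    have h1 : ∀ i : Fin r, ((univ : Finset (Fin (n i))).filter
        (fun j => (⟨i, j⟩ : Σ i, Fin (n i)).1 ≠ i0)).card = if i = i0 then 0 else n i := by
      intro i
      by_cases hi : i = i0
      · subst hi; simp
      · have he : ((univ : Finset (Fin (n i))).filter
            (fun j => (⟨i, j⟩ : Σ i, Fin (n i)).1 ≠ i0)) = univ := by
          ext j; simp [hi]
        rw [if_neg hi, he, Finset.card_univ, Fintype.card_fin]
    rw [Finset.sum_congr rfl fun i _ => h1 i]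
    have h2 : (∑ i, if i = i0 then 0 else n i) + n i0 = ∑ i, n i := by
      have h3 : ∀ i : Fin r, (if i = i0 then 0 else n i) + (if i = i0 then n i else 0)
          = n i := by intro i; by_cases hi : i = i0 <;> simp [hi]
      calc (∑ i, if i = i0 then 0 else n i) + n i0
          = (∑ i, if i = i0 then 0 else n i) + ∑ i, (if i = i0 then n i else 0) := by
            rw [Finset.sum_ite_eq' univ i0 n, if_pos (Finset.mem_univ i0)]
        _ = ∑ i, n i := by
            rw [← Finset.sum_add_distrib]
            exact Finset.sum_congr rfl fun i _ => h3 i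
    omega
  -- classes of nonspecial vertices
  set C : Fin (t - 1) → Finset (Σ i : Fin r, Fin (n i)) :=
    fun p => univ.filter (fun v => ¬ spec v ∧ g v.1 = p) with hC
  have hCcard : ∀ p : Fin (t - 1), (C p).card = partSum x g p := by
    intro p
    rw [hC, card_filter_sigma' n (fun v => ¬ spec v ∧ g v.1 = p)]
    have h1 : ∀ i : Fin r, ((univ : Finset (Fin (n i))).filter
        (fun j => ¬ spec ⟨i, j⟩ ∧ g (⟨i, j⟩ : Σ i, Fin (n i)).1 = p)).card
        = if g i = p then x i else 0 := by
      intro i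
      by_cases hgi : g i = p
      · rw [if_pos hgi]
        by_cases hi : i = i0
        · subst hi
          have he : ((univ : Finset (Fin (n i))).filter
              (fun j => ¬ spec ⟨i, j⟩ ∧ g (⟨i, j⟩ : Σ i, Fin (n i)).1 = p))
              = univ.filter (fun j : Fin (n i) => ¬ j.val < k - 1) := by
            ext j; simp [hspec, hgi]
          have hsum := Finset.card_filter_add_card_filter_not
            (s := (univ : Finset (Fin (n i)))) (p := fun j : Fin (n i) => j.val < k - 1)
          rw [card_fin_lt _ _ (by omega), Finset.card_univ, Fintype.card_fin] at hsum
          rw [he]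
          have hxi : x i = n i - (k - 1) := by rw [hx, Function.update_self]
          omega
        · have he : ((univ : Finset (Fin (n i))).filter
              (fun j => ¬ spec ⟨i, j⟩ ∧ g (⟨i, j⟩ : Σ i, Fin (n i)).1 = p)) = univ := by
            ext j; simp [hspec, hi, hgi]
          rw [he, Finset.card_univ, Fintype.card_fin, hx, Function.update_of_ne hi]
      · have he : ((univ : Finset (Fin (n i))).filter
            (fun j => ¬ spec ⟨i, j⟩ ∧ g (⟨i, j⟩ : Σ i, Fin (n i)).1 = p)) = ∅ := by
          ext j; simp [hgi]
        rw [if_neg hgi, he, Finset.card_empty]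
    rw [Finset.sum_congr rfl fun i _ => h1 i, partSum, Finset.sum_filter]
  -- the edge-witness finset
  set A1 : Finset ((Σ i : Fin r, Fin (n i)) × (Σ i : Fin r, Fin (n i))) :=
    S ×ˢ (univ.filter (fun v : Σ i : Fin r, Fin (n i) => v.1 ≠ i0)) with hA1
  set PQ : Finset (Fin (t - 1) × Fin (t - 1)) :=
    univ.filter (fun pq : Fin (t - 1) × Fin (t - 1) => pq.1 < pq.2) with hPQ
  set A2 := PQ.biUnion (fun pq => C pq.1 ×ˢ C pq.2) with hA2
  have hmemA1 : ∀ z ∈ A1, spec z.1 ∧ z.2.1 ≠ i0 := by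
    rintro ⟨u, v⟩ hz
    rw [hA1, Finset.mem_product] at hz
    refine ⟨(Finset.mem_filter.1 hz.1).2, (Finset.mem_filter.1 hz.2).2⟩
  have hmemA2 : ∀ z ∈ A2, (¬ spec z.1 ∧ ¬ spec z.2) ∧ g z.1.1 < g z.2.1 := by
    rintro ⟨u, v⟩ hz
    rw [hA2, Finset.mem_biUnion] at hz
    obtain ⟨pq, hpq, hz⟩ := hz
    rw [Finset.mem_product] at hz
    have hu := Finset.mem_filter.1 hz.1
    have hv := Finset.mem_filter.1 hz.2
    have hlt := (Finset.mem_filter.1 hpq).2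
    refine ⟨⟨hu.2.1, hv.2.1⟩, ?_⟩
    rw [hu.2.2, hv.2.2]; exact hlt
  have hdisj12 : Disjoint A1 A2 := by
    rw [Finset.disjoint_left]
    intro z hz1 hz2
    exact (hmemA2 z hz2).1.1 (hmemA1 z hz1).1
  have hadjA : ∀ z ∈ A1 ∪ A2, H.Adj z.1 z.2 := by
    intro z hz
    rw [hH, SimpleGraph.fromRel_adj]
    rcases Finset.mem_union.1 hz with h | h
    · obtain ⟨hs, hv⟩ := hmemA1 z h
      exact ⟨fun hzz => hv (by rw [← hzz, hs.1]), Or.inl (Or.inl ⟨hs, hv⟩)⟩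
    · obtain ⟨⟨hs1, hs2⟩, hlt⟩ := hmemA2 z h
      exact ⟨fun hzz => absurd (by rw [hzz]) (ne_of_lt hlt),
        Or.inl (Or.inr (Or.inr ⟨hs1, hs2, ne_of_lt hlt⟩))⟩
  have hinjA : Set.InjOn (fun z : (Σ i : Fin r, Fin (n i)) × (Σ i : Fin r, Fin (n i)) =>
      s(z.1, z.2)) (A1 ∪ A2 : Finset _) := by
    intro z hz w hw hzw
    simp only [Sym2.eq_iff] at hzw
    rcases hzw with ⟨h1, h2⟩ | ⟨h1, h2⟩
    · exact Prod.ext h1 h2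
    · exfalso
      simp only [Finset.coe_union, Set.mem_union, Finset.mem_coe] at hz hw
      rcases hz with hz | hz
      · have hzs := (hmemA1 z hz).1
        have hz2 : ¬ spec z.2 := by
          intro hc
          exact (hmemA1 z hz).2 hc.1
        rcases hw with hw | hw
        · have hws := (hmemA1 w hw).1
          rw [← h2] at hws
          exact hz2 hws
        · have hwn := (hmemA2 w hw).1.2
          rw [← h1] at hwn
          exact hwn hzs
      · rcases hw with hw | hw
        · have hws := (hmemA1 w hw).1
          rw [← h2] at hws
          exact (hmemA2 z hz).1.2 hws
        · have hlt1 := (hmemA2 z hz).2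
          have hlt2 := (hmemA2 w hw).2
          rw [← h2, ← h1] at hlt2
          exact absurd hlt1 (not_lt_of_gt hlt2)
  have hA1card : A1.card = (k - 1) * ((∑ i, n i) - n i0) := by
    rw [hA1, Finset.card_product, hScard, hTcard]
  have hA2card : A2.card = pairProdSum x g := by
    rw [hA2, Finset.card_biUnion]
    · rw [pairProdSum]
      refine Finset.sum_congr rfl fun pq _ => ?_
      rw [Finset.card_product, hCcard, hCcard]
    · intro pq hpq pq' hpq' hne'
      rw [Function.onFun, Finset.disjoint_left]
      rintro ⟨u, v⟩ hz hz'
      rw [Finset.mem_product] at hz hz'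
      apply hne'
      have h1 := (Finset.mem_filter.1 hz.1).2.2
      have h2 := (Finset.mem_filter.1 hz'.1).2.2
      have h3 := (Finset.mem_filter.1 hz.2).2.2
      have h4 := (Finset.mem_filter.1 hz'.2).2.2
      exact Prod.ext (h1 ▸ h2.symm ▸ rfl) (h3 ▸ h4.symm ▸ rfl)
  have hcount : (k - 1) * ((∑ i, n i) - n i0) + pairProdSum x g ≤ H.edgeSet.ncard := by
    have hsub : ↑((A1 ∪ A2).image (fun z : (Σ i : Fin r, Fin (n i)) × (Σ i : Fin r, Fin (n i))
        => s(z.1, z.2))) ⊆ H.edgeSet := by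
      intro e he
      simp only [Finset.coe_image, Set.mem_image, Finset.mem_coe] at he
      obtain ⟨z, hz, rfl⟩ := he
      exact (SimpleGraph.mem_edgeSet H).2 (hadjA z hz)
    calc (k - 1) * ((∑ i, n i) - n i0) + pairProdSum x g
        = (A1 ∪ A2).card := by
          rw [Finset.card_union_of_disjoint hdisj12, hA1card, hA2card]
      _ = ((A1 ∪ A2).image (fun z : (Σ i : Fin r, Fin (n i)) × (Σ i : Fin r, Fin (n i))
            => s(z.1, z.2))).card := (Finset.card_image_of_injOn hinjA).symm
      _ = (↑((A1 ∪ A2).image (fun z : (Σ i : Fin r, Fin (n i)) × (Σ i : Fin r, Fin (n i))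
            => s(z.1, z.2))) : Set (Sym2 (Σ i : Fin r, Fin (n i)))).ncard :=
          (Set.ncard_coe_finset _).symm
      _ ≤ H.edgeSet.ncard := Set.ncard_le_ncard hsub (Set.toFinite _)
  refine le_trans hcount (le_csSup ?_ ?_)
  · refine ⟨(completeMultipartite n).edgeSet.ncard, ?_⟩
    rintro m ⟨H', hH', -, rfl⟩
    exact Set.ncard_le_ncard (SimpleGraph.edgeSet_mono hH') (Set.toFinite _)
  · exact ⟨H, hHG, hnocopy, rfl⟩

/-- Lower bound: for `k ≥ 2`, `t ≥ 3`, `r ≥ t`, positive `n_i` with `n_1 ≥ k` and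
`n_1 ≤ n_i` for all `i`, with `n = Σ n_i`,
`ex(K_{n_1,…,n_r}, kK_t) ≥ (k−1)(n − n_1) + f_t(n_1−(k−1), n_2, …, n_r)`. -/
theorem stmt_4 (k t r : ℕ) (hk : 2 ≤ k) (ht : 3 ≤ t) (htr : t ≤ r)
    (n : Fin r → ℕ) (hpos : ∀ i, 0 < n i)
    (hkn : k ≤ n ⟨0, by omega⟩) (hmin : ∀ i, n ⟨0, by omega⟩ ≤ n i) :
    (k - 1) * ((∑ i, n i) - n ⟨0, by omega⟩) +
        fT t (Function.update n ⟨0, by omega⟩ (n ⟨0, by omega⟩ - (k - 1))) ≤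
      exNum (completeMultipartite n) (kCliques k t) := by
  exact main_aux k t r hk ht htr n ⟨0, by omega⟩ hkn
end

section
/- Let k, r, t be integers with r > t ≥ 3 and k ≥ 2, and let n_1, ..., n_r be integers with k ≤ n_1 ≤ n_2 ≤ ... ≤ n_r and n = Σ_{i=1}^r n_i. For a nonempty set I ⊆ {1,...,r} write n_I = Σ_{i∈I} n_i and m_I = min_{i∈I} n_i, and for a partition P of {1,...,r} write n_P = max_{I∈P} (n_I − m_I). Then the maximum, over all partitions P of {1,...,r} into t−1 nonempty parts, of (k−1)·n_P + Σ_{I ≠ I' ∈ P} n_I·n_{I'} (the sum over unordered pairs of distinct parts) equals (k−1)(n − n_1) + f_t(n_1−(k−1), n_2, ..., n_r). -/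
open SimpleGraph Finset

lemma partSum_total {r s : ℕ} (x : Fin r → ℕ) (g : Fin r → Fin s) :
    ∑ i, partSum x g i = ∑ a, x a :=
  Finset.sum_fiberwise _ _ _

lemma le_partSum {r s : ℕ} (x : Fin r → ℕ) (g : Fin r → Fin s) {a : Fin r} {i : Fin s}
    (h : g a = i) : x a ≤ partSum x g i :=
  Finset.single_le_sum (f := x) (fun _ _ => Nat.zero_le _)
    (by simp [h])

lemma sq_sum_split {s : ℕ} (S : Fin s → ℕ) :
    (∑ i, S i)^2 = 2 * (∑ p ∈ Finset.univ.filter (fun p : Fin s × Fin s => p.1 < p.2),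
      S p.1 * S p.2) + ∑ i, (S i)^2 := by
  have h1 : (∑ i, S i)^2 = ∑ p ∈ (univ ×ˢ univ : Finset (Fin s × Fin s)), S p.1 * S p.2 := by
    rw [sq, Finset.sum_mul_sum, Finset.sum_product]
  rw [h1, ← Finset.sum_filter_add_sum_filter_not (univ ×ˢ univ)
    (fun p : Fin s × Fin s => p.1 < p.2)]
  have h2 : (univ ×ˢ univ : Finset (Fin s × Fin s)).filter (fun p => p.1 < p.2)
      = univ.filter (fun p : Fin s × Fin s => p.1 < p.2) := by
    simp [Finset.univ_product_univ]
  rw [h2]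
  have h3 : ∑ p ∈ (univ ×ˢ univ : Finset (Fin s × Fin s)).filter (fun p => ¬ p.1 < p.2),
      S p.1 * S p.2
      = (∑ p ∈ univ.filter (fun p : Fin s × Fin s => p.1 < p.2), S p.1 * S p.2)
        + ∑ i, (S i)^2 := by
    rw [← Finset.sum_filter_add_sum_filter_not
      ((univ ×ˢ univ : Finset (Fin s × Fin s)).filter (fun p => ¬ p.1 < p.2))
      (fun p : Fin s × Fin s => p.2 < p.1)]
    congr 1
    · apply Finset.sum_nbij' (fun p => Prod.swap p) (fun p => Prod.swap p)
      · intro p hp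
        simp only [Finset.mem_filter, Finset.mem_univ, Finset.mem_product, true_and,
          Prod.fst_swap, Prod.snd_swap, Fin.lt_def] at hp ⊢
        omega
      · intro p hp
        simp only [Finset.mem_filter, Finset.mem_univ, Finset.mem_product, true_and,
          Prod.fst_swap, Prod.snd_swap, Fin.lt_def] at hp ⊢
        omega
      · intro p _; rfl
      · intro p _; rfl
      · intro p _; exact mul_comm _ _
    · rw [show (((univ ×ˢ univ : Finset (Fin s × Fin s)).filter
          (fun p => ¬ p.1 < p.2)).filter (fun p : Fin s × Fin s => ¬ p.2 < p.1))
        = univ.filter (fun p : Fin s × Fin s => p.1 = p.2) from ?_]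
      · apply Finset.sum_nbij' (fun p : Fin s × Fin s => p.1) (fun i : Fin s => (i, i))
        · intro p _; exact Finset.mem_univ _
        · intro i _
          simp only [Finset.mem_filter, Finset.mem_univ, true_and]
        · intro p hp
          simp only [Finset.mem_filter, Finset.mem_univ, true_and] at hp
          exact Prod.ext rfl hp
        · intro i _; rfl
        · intro p hp
          simp only [Finset.mem_filter, Finset.mem_univ, true_and] at hp
          rw [sq, ← hp]
      · ext p
        simp only [Finset.mem_filter, Finset.mem_univ, Finset.mem_product, true_and,
          Fin.lt_def, not_lt, Fin.ext_iff]
        omega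
  rw [h3]; ring

lemma two_mul_pairProdSum {r s : ℕ} (x : Fin r → ℕ) (g : Fin r → Fin s) :
    (∑ a, x a)^2 = 2 * pairProdSum x g + ∑ i, (partSum x g i)^2 := by
  rw [← partSum_total x g]; exact sq_sum_split _

lemma partSum_update_eq {r s : ℕ} (x : Fin r → ℕ) (g : Fin r → Fin s) (b : Fin r)
    (v : ℕ) {i : Fin s} (h : g b = i) :
    partSum (Function.update x b v) g i + x b = partSum x g i + v := by
  unfold partSum
  have hb : b ∈ Finset.univ.filter (fun a => g a = i) := by simp [h]
  rw [← Finset.add_sum_erase _ _ hb, ← Finset.add_sum_erase _ x hb,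
    Function.update_self,
    Finset.sum_congr rfl (fun a ha => Function.update_of_ne (Finset.ne_of_mem_erase ha) v x)]
  ring

lemma partSum_update_ne {r s : ℕ} (x : Fin r → ℕ) (g : Fin r → Fin s) (b : Fin r)
    (v : ℕ) {i : Fin s} (h : g b ≠ i) :
    partSum (Function.update x b v) g i = partSum x g i := by
  unfold partSum
  refine Finset.sum_congr rfl (fun a ha => ?_)
  have : g a = i := (Finset.mem_filter.1 ha).2
  exact Function.update_of_ne (fun hab : a = b => h (hab ▸ this)) v x

lemma partSum_comp {r s : ℕ} (x : Fin r → ℕ) (g : Fin r → Fin s) (σ : Equiv.Perm (Fin r))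
    (i : Fin s) : partSum x (fun b => g (σ b)) i = partSum (fun b => x (σ.symm b)) g i := by
  unfold partSum
  refine Finset.sum_equiv σ (fun b => ?_) (fun b _ => ?_)
  · simp
  · rw [Equiv.symm_apply_apply]

lemma sum_sub_one {s : ℕ} (f h : Fin s → ℤ) (j : Fin s)
    (hfh : ∀ i, i ≠ j → f i = h i) : ∑ i, f i = ∑ i, h i + (f j - h j) := by
  rw [← Finset.add_sum_erase _ f (Finset.mem_univ j), ← Finset.add_sum_erase _ h (Finset.mem_univ j),
    Finset.sum_congr rfl (fun i hi => hfh i (Finset.ne_of_mem_erase hi))]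
  ring

lemma sum_sub_two {s : ℕ} (f h : Fin s → ℤ) (j j' : Fin s) (hjj : j ≠ j')
    (hfh : ∀ i, i ≠ j → i ≠ j' → f i = h i) :
    ∑ i, f i = ∑ i, h i + (f j - h j) + (f j' - h j') := by
  have hj' : j' ∈ Finset.univ.erase j := Finset.mem_erase.2 ⟨hjj.symm, Finset.mem_univ _⟩
  rw [← Finset.add_sum_erase _ f (Finset.mem_univ j), ← Finset.add_sum_erase _ h (Finset.mem_univ j),
    ← Finset.add_sum_erase _ f hj', ← Finset.add_sum_erase _ h hj',
    Finset.sum_congr rfl (fun i hi => hfh i (Finset.ne_of_mem_erase (Finset.mem_of_mem_erase hi))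
      (Finset.ne_of_mem_erase hi))]
  ring

set_option maxHeartbeats 1000000 in
lemma main_aux_s6 {r u : ℕ} (hr : 0 < r) (n : Fin r → ℕ) (hmono : Monotone n) (K : ℕ)
    (hKz : K ≤ n ⟨0, hr⟩)
    (hne : (Finset.univ.filter (fun g : Fin r → Fin u => Function.Surjective g)).Nonempty) :
    (Finset.univ.filter (fun g : Fin r → Fin u => Function.Surjective g)).sup
        (fun g => K * (Finset.univ.sup fun i : Fin u =>
            partSum n g i - sInf (n '' {a | g a = i})) + pairProdSum n g) =
      K * ((∑ i, n i) - n ⟨0, hr⟩) +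
        (Finset.univ.filter (fun g : Fin r → Fin u => Function.Surjective g)).sup
          (fun g => pairProdSum (Function.update n ⟨0, hr⟩ (n ⟨0, hr⟩ - K)) g) := by
  obtain ⟨g₀, hg₀⟩ := hne
  haveI : Nonempty (Fin u) := ⟨g₀ ⟨0, hr⟩⟩
  set z : Fin r := ⟨0, hr⟩ with hzdef
  set n' : Fin r → ℕ := Function.update n z (n z - K) with hn'def
  set N : ℕ := ∑ i, n i with hNdef
  set Sur := Finset.univ.filter (fun g : Fin r → Fin u => Function.Surjective g) with hSurdef
  have hz_le : ∀ a : Fin r, n z ≤ n a := fun a =>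
    hmono (by rw [Fin.le_def]; exact Nat.zero_le _)
  have hzN : n z ≤ N := Finset.single_le_sum (fun i _ => Nat.zero_le _) (Finset.mem_univ z)
  have htot' : ∑ a, n' a + K = N := by
    rw [hn'def, Finset.sum_update_of_mem (Finset.mem_univ z),
      Finset.sdiff_singleton_eq_erase]
    have := Finset.add_sum_erase Finset.univ n (Finset.mem_univ z)
    omega
  -- per-surjection facts
  have hmIz : ∀ g : Fin r → Fin u, sInf (n '' {a | g a = g z}) = n z := by
    intro g
    refine le_antisymm (Nat.sInf_le ⟨z, rfl, rfl⟩) ?_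
    obtain ⟨a, _, hna⟩ := Nat.sInf_mem (⟨n z, z, rfl, rfl⟩ : (n '' {a | g a = g z}).Nonempty)
    rw [← hna]
    exact hz_le a
  -- direction 2 : for each g, the RHS term is at most the LHS term
  have dir2 : ∀ g : Fin r → Fin u, Function.Surjective g →
      K * (N - n z) + pairProdSum n' g ≤
        K * (Finset.univ.sup fun i : Fin u =>
            partSum n g i - sInf (n '' {a | g a = i})) + pairProdSum n g := by
    intro g hg
    set M := Finset.univ.sup fun i : Fin u =>
        partSum n g i - sInf (n '' {a | g a = i}) with hMs
    have hzS : n z ≤ partSum n g (g z) := le_partSum n g rfl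
    have hMz : partSum n g (g z) - n z ≤ M := by
      have h := Finset.le_sup (f := fun i : Fin u =>
        partSum n g i - sInf (n '' {a | g a = i})) (Finset.mem_univ (g z))
      simp only [hmIz g] at h
      exact h
    have hS'gz : partSum n' g (g z) + n z = partSum n g (g z) + (n z - K) :=
      partSum_update_eq n g z _ rfl
    have hS'ne : ∀ i, i ≠ g z → partSum n' g i = partSum n g i := fun i hi =>
      partSum_update_ne n g z _ (fun h => hi h.symm)
    have E1 : ((N : ℤ))^2 = 2 * (pairProdSum n g : ℤ) + ∑ i, (partSum n g i : ℤ)^2 := by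
      exact_mod_cast congrArg (Nat.cast : ℕ → ℤ) (two_mul_pairProdSum n g)
    have E2 : ((N : ℤ) - K)^2 = 2 * (pairProdSum n' g : ℤ) + ∑ i, (partSum n' g i : ℤ)^2 := by
      have := congrArg (Nat.cast : ℕ → ℤ) (two_mul_pairProdSum n' g)
      push_cast at this
      have ht : (∑ a, (n' a : ℤ)) = (N : ℤ) - K := by
        have := htot'; push_cast [← this]; ring
      rw [ht] at this
      exact this
    have E3 : ∑ i, (partSum n' g i : ℤ)^2 = ∑ i, (partSum n g i : ℤ)^2 +
        ((partSum n' g (g z) : ℤ)^2 - (partSum n g (g z) : ℤ)^2) := by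
      exact sum_sub_one _ _ (g z) (fun i hi => by rw [hS'ne i hi])
    have hp' : (partSum n' g (g z) : ℤ) = (partSum n g (g z) : ℤ) - K := by omega
    rw [hp'] at E3
    have hMc : (partSum n g (g z) : ℤ) - (n z : ℤ) ≤ (M : ℤ) := by omega
    have hKM : (K : ℤ) * ((partSum n g (g z) : ℤ) - (n z : ℤ)) ≤ (K : ℤ) * (M : ℤ) :=
      mul_le_mul_of_nonneg_left hMc (Int.natCast_nonneg K)
    have hpp : 2 * (pairProdSum n' g : ℤ) = 2 * (pairProdSum n g : ℤ)
        - 2 * (N : ℤ) * K + 2 * (partSum n g (g z) : ℤ) * K := by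
      linear_combination E1 - E2 - E3
    zify [hzN]
    linarith [hpp, hKM]
  -- direction 1 : for each g there is g' with LHS term at most the RHS term
  have dir1 : ∀ g : Fin r → Fin u, Function.Surjective g →
      ∃ g' : Fin r → Fin u, Function.Surjective g' ∧
        K * (Finset.univ.sup fun i : Fin u =>
            partSum n g i - sInf (n '' {a | g a = i})) + pairProdSum n g ≤
          K * (N - n z) + pairProdSum n' g' := by
    intro g hg
    set M := Finset.univ.sup fun i : Fin u =>
        partSum n g i - sInf (n '' {a | g a = i}) with hMs
    have hzS : n z ≤ partSum n g (g z) := le_partSum n g rfl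
    have hMz : partSum n g (g z) - n z ≤ M := by
      have h := Finset.le_sup (f := fun i : Fin u =>
        partSum n g i - sInf (n '' {a | g a = i})) (Finset.mem_univ (g z))
      simp only [hmIz g] at h
      exact h
    have E1 : ((N : ℤ))^2 = 2 * (pairProdSum n g : ℤ) + ∑ i, (partSum n g i : ℤ)^2 := by
      exact_mod_cast congrArg (Nat.cast : ℕ → ℤ) (two_mul_pairProdSum n g)
    obtain ⟨istar, -, hMdef⟩ := Finset.exists_mem_eq_sup Finset.univ Finset.univ_nonempty
      (fun i : Fin u => partSum n g i - sInf (n '' {a | g a = i}))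
    obtain ⟨b0, hb0⟩ := hg istar
    obtain ⟨a, ha, hna⟩ := Nat.sInf_mem (⟨n b0, b0, hb0, rfl⟩ :
      (n '' {a | g a = istar}).Nonempty)
    have ha' : g a = istar := ha
    have hmB : n a ≤ partSum n g istar := le_partSum n g ha'
    have hdm : n z ≤ n a := hz_le a
    by_cases hcase : istar = g z
    · -- no move needed
      refine ⟨g, hg, ?_⟩
      have hS'gz : partSum n' g (g z) + n z = partSum n g (g z) + (n z - K) :=
        partSum_update_eq n g z _ rfl
      have hS'ne : ∀ i, i ≠ g z → partSum n' g i = partSum n g i := fun i hi =>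
        partSum_update_ne n g z _ (fun h => hi h.symm)
      have E2 : ((N : ℤ) - K)^2 = 2 * (pairProdSum n' g : ℤ) + ∑ i, (partSum n' g i : ℤ)^2 := by
        have := congrArg (Nat.cast : ℕ → ℤ) (two_mul_pairProdSum n' g)
        push_cast at this
        have ht : (∑ a, (n' a : ℤ)) = (N : ℤ) - K := by
          have := htot'; push_cast [← this]; ring
        rw [ht] at this
        exact this
      have E3 : ∑ i, (partSum n' g i : ℤ)^2 = ∑ i, (partSum n g i : ℤ)^2 +
          ((partSum n' g (g z) : ℤ)^2 - (partSum n g (g z) : ℤ)^2) :=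
        sum_sub_one _ _ (g z) (fun i hi => by rw [hS'ne i hi])
      have hp' : (partSum n' g (g z) : ℤ) = (partSum n g (g z) : ℤ) - K := by omega
      rw [hp'] at E3
      have hMeq : (M : ℤ) = (partSum n g (g z) : ℤ) - (n z : ℤ) := by
        rw [hcase] at hMdef
        rw [hmIz g] at hMdef
        omega
      have hpp : 2 * (pairProdSum n' g : ℤ) = 2 * (pairProdSum n g : ℤ)
          - 2 * (N : ℤ) * K + 2 * (partSum n g (g z) : ℤ) * K := by
        linear_combination E1 - E2 - E3
      have hKMeq : (K : ℤ) * (M : ℤ)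
          = (K : ℤ) * ((partSum n g (g z) : ℤ) - (n z : ℤ)) := by rw [hMeq]
      zify [hzN]
      linarith [hpp, hKMeq]
    · -- swap z and a
      have haz : a ≠ z := fun h => hcase (by rw [← ha', h])
      set σ := Equiv.swap z a with hσdef
      refine ⟨fun b => g (σ b), hg.comp σ.surjective, ?_⟩
      set y : Fin r → ℕ := fun b => n' (σ.symm b) with hydef
      have hpsc : ∀ i, partSum n' (fun b => g (σ b)) i = partSum y g i := fun i =>
        partSum_comp n' g σ i
      have hppc : pairProdSum n' (fun b => g (σ b)) = pairProdSum y g := by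
        unfold pairProdSum
        exact Finset.sum_congr rfl (fun p _ => by rw [hpsc p.1, hpsc p.2])
      have hyeq : y = Function.update (Function.update n z (n a)) a (n z - K) := by
        funext b
        rcases eq_or_ne b z with hb | hb
        · subst hb
          rw [hydef]
          simp only [hσdef, Equiv.symm_swap, Equiv.swap_apply_left]
          rw [hn'def, Function.update_of_ne haz,
            Function.update_of_ne (Ne.symm haz), Function.update_self]
        · rcases eq_or_ne b a with hb2 | hb2
          · subst hb2
            rw [hydef]
            simp only [hσdef, Equiv.symm_swap, Equiv.swap_apply_right]
            rw [hn'def, Function.update_self, Function.update_self]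
          · rw [hydef]
            simp only [hσdef, Equiv.symm_swap, Equiv.swap_apply_of_ne_of_ne hb hb2]
            rw [hn'def, Function.update_of_ne hb, Function.update_of_ne hb2,
              Function.update_of_ne hb]
      have hgzi : g z ≠ istar := fun h => hcase h.symm
      have hgai : g a ≠ g z := fun h => hcase (ha' ▸ h)
      have hSYz : partSum y g (g z) + n z = partSum n g (g z) + n a := by
        rw [hyeq, partSum_update_ne _ g a _ hgai]
        exact partSum_update_eq n g z _ rfl
      have hSYi : partSum y g istar + n a = partSum n g istar + (n z - K) := by
        rw [hyeq]
        have h1 : partSum (Function.update (Function.update n z (n a)) a (n z - K)) g istar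
            + Function.update n z (n a) a
            = partSum (Function.update n z (n a)) g istar + (n z - K) :=
          partSum_update_eq _ g a _ ha'
        rw [Function.update_of_ne haz] at h1
        rw [partSum_update_ne n g z _ hgzi] at h1
        exact h1
      have hSYne : ∀ i, i ≠ g z → i ≠ istar → partSum y g i = partSum n g i := by
        intro i h1 h2
        rw [hyeq, partSum_update_ne _ g a _ (fun h => h2 (by rw [← h, ha'])),
          partSum_update_ne n g z _ (fun h => h1 h.symm)]
      have htoty : ∑ b, y b + K = N := by
        rw [hydef]
        rw [Equiv.sum_comp σ.symm n']
        exact htot'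
      have E2y : ((N : ℤ) - K)^2 = 2 * (pairProdSum y g : ℤ) + ∑ i, (partSum y g i : ℤ)^2 := by
        have := congrArg (Nat.cast : ℕ → ℤ) (two_mul_pairProdSum y g)
        push_cast at this
        have ht : (∑ b, (y b : ℤ)) = (N : ℤ) - K := by
          have := htoty; push_cast [← this]; ring
        rw [ht] at this
        exact this
      have E3y : ∑ i, (partSum y g i : ℤ)^2 = ∑ i, (partSum n g i : ℤ)^2 +
          ((partSum y g (g z) : ℤ)^2 - (partSum n g (g z) : ℤ)^2) +
          ((partSum y g istar : ℤ)^2 - (partSum n g istar : ℤ)^2) :=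
        sum_sub_two _ _ (g z) istar hgzi (fun i h1 h2 => by rw [hSYne i h1 h2])
      have hSYzc : (partSum y g (g z) : ℤ) =
          (partSum n g (g z) : ℤ) - (n z : ℤ) + (n a : ℤ) := by omega
      have hSYic : (partSum y g istar : ℤ) =
          (partSum n g istar : ℤ) - (n a : ℤ) + (n z : ℤ) - K := by omega
      rw [hSYzc, hSYic] at E3y
      have hMeq : (M : ℤ) = (partSum n g istar : ℤ) - (n a : ℤ) := by
        rw [← hna] at hMdef
        omega
      have hMge : (partSum n g (g z) : ℤ) - (n z : ℤ) ≤ (M : ℤ) := by omega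
      have hprod : 0 ≤ ((n a : ℤ) - (n z : ℤ)) *
          (((partSum n g istar : ℤ) - (n a : ℤ)) -
            ((partSum n g (g z) : ℤ) - (n z : ℤ))) :=
        mul_nonneg (by omega) (by linarith [hMeq, hMge])
      have hppy : 2 * (pairProdSum y g : ℤ) = 2 * (pairProdSum n g : ℤ)
          - ((N : ℤ)^2 - ((N : ℤ) - K)^2
             + ((partSum n g (g z) : ℤ) - (n z : ℤ) + (n a : ℤ))^2
             - (partSum n g (g z) : ℤ)^2
             + ((partSum n g istar : ℤ) - (n a : ℤ) + (n z : ℤ) - K)^2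
             - (partSum n g istar : ℤ)^2) := by
        linear_combination E1 - E2y - E3y
      have hKMeq : (K : ℤ) * (M : ℤ)
          = (K : ℤ) * ((partSum n g istar : ℤ) - (n a : ℤ)) := by rw [hMeq]
      rw [hppc]
      zify [hzN]
      linarith [hppy, hKMeq, hprod]
  -- conclude
  refine le_antisymm (Finset.sup_le ?_) ?_
  · intro g hg
    have hgs : Function.Surjective g := (Finset.mem_filter.1 hg).2
    obtain ⟨g', hg's, hle⟩ := dir1 g hgs
    refine le_trans hle (Nat.add_le_add_left ?_ _)
    exact Finset.le_sup (Finset.mem_filter.2 ⟨Finset.mem_univ _, hg's⟩)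
  · obtain ⟨g, hgmem, hfT⟩ := Finset.exists_mem_eq_sup Sur ⟨g₀, hg₀⟩
      (fun g => pairProdSum n' g)
    rw [hfT]
    refine le_trans (dir2 g (Finset.mem_filter.1 hgmem).2) ?_
    exact Finset.le_sup (f := fun g => K * (Finset.univ.sup fun i : Fin u =>
      partSum n g i - sInf (n '' {a | g a = i})) + pairProdSum n g) hgmem

/-- Equivalence of the two formulations (Han–Zhao's conjectured value versus the
`f_t`-formulation): for `r > t ≥ 3`, `k ≥ 2` and `k ≤ n_1 ≤ ⋯ ≤ n_r`, the maximum over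
partitions `P` of `[r]` into `t−1` nonempty parts of
`(k−1)·max_{I∈P}(n_I − m_I) + Σ_{I≠I'∈P} n_I n_{I'}` equals
`(k−1)(n − n_1) + f_t(n_1−(k−1), n_2, …, n_r)`. -/
theorem stmt_6 (k r t : ℕ) (ht : 3 ≤ t) (htr : t < r) (hk : 2 ≤ k)
    (n : Fin r → ℕ) (hmono : Monotone n) (hkn : k ≤ n ⟨0, by omega⟩) :
    (Finset.univ.filter (fun g : Fin r → Fin (t - 1) => Function.Surjective g)).sup
        (fun g =>
          (k - 1) * (Finset.univ.sup fun i : Fin (t - 1) =>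
              partSum n g i - sInf (n '' {a | g a = i})) +
            pairProdSum n g) =
      (k - 1) * ((∑ i, n i) - n ⟨0, by omega⟩) +
        fT t (Function.update n ⟨0, by omega⟩ (n ⟨0, by omega⟩ - (k - 1))) := by
  have hKz' : k - 1 ≤ n ⟨0, by omega⟩ := le_trans (Nat.sub_le k 1) hkn
  have hne : (Finset.univ.filter
      (fun g : Fin r → Fin (t - 1) => Function.Surjective g)).Nonempty := by
    refine ⟨fun a => ⟨min a.1 (t - 2), by omega⟩,
      Finset.mem_filter.2 ⟨Finset.mem_univ _, fun i => ?_⟩⟩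
    refine ⟨⟨i.1, by omega⟩, Fin.ext ?_⟩
    have := i.2
    show min (i.1) (t - 2) = i.1
    omega
  exact main_aux_s6 (by omega) n hmono (k - 1) hKz' hne
end

section
/- Let n_1, n_2, ..., n_r be positive integers and let μ be an index with 2 ≤ μ ≤ r and n_μ − 1 ≥ n_1 + 1. Then f_3 applied to the multiset obtained from {n_1, n_2, ..., n_r} by replacing n_1 with n_1 + 1 and n_μ with n_μ − 1 is at most f_3(n_1, n_2, ..., n_r) + n_μ − (n_1 + 1). -/
open SimpleGraph Finset

lemma pairProd_two {r : ℕ} (x : Fin r → ℕ) (g : Fin r → Fin 2) :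
    pairProdSum x g = partSum x g 0 * partSum x g 1 := by
  unfold pairProdSum
  have hf : Finset.univ.filter (fun p : Fin 2 × Fin 2 => p.1 < p.2) =
      {((0 : Fin 2), (1 : Fin 2))} := by decide
  rw [hf]; simp

lemma sum_split {r : ℕ} (x : Fin r → ℕ) (g : Fin r → Fin 2) (j k : Fin r) (hjk : j ≠ k)
    (i : Fin 2) :
    partSum x g i = (if g j = i then x j else 0) + (if g k = i then x k else 0)
      + ∑ a ∈ Finset.univ.filter (fun a => a ≠ j ∧ a ≠ k ∧ g a = i), x a := by
  unfold partSum
  rw [Finset.sum_filter, Finset.sum_filter]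
  have key : ∀ a : Fin r, (if g a = i then x a else 0) =
      (if a = j then (if g j = i then x j else 0) else 0)
      + (if a = k then (if g k = i then x k else 0) else 0)
      + (if a ≠ j ∧ a ≠ k ∧ g a = i then x a else 0) := by
    intro a
    by_cases h1 : a = j
    · subst h1; by_cases h2 : g a = i <;> simp [hjk, h2]
    · by_cases h2 : a = k
      · subst h2; by_cases h3 : g a = i <;> simp [h1, h3]
      · by_cases h3 : g a = i <;> simp [h1, h2, h3]
  rw [Finset.sum_congr rfl (fun a _ => key a), Finset.sum_add_distrib, Finset.sum_add_distrib]
  simp [Finset.sum_ite_eq']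

lemma fT_three {r : ℕ} (x : Fin r → ℕ) : fT 3 x =
    (Finset.univ.filter (fun g : Fin r → Fin 2 => Function.Surjective g)).sup
      (fun g => pairProdSum x g) := rfl

lemma main_ineq (m1 t C0 C1 F : ℕ)
    (hg : (m1 + C0) * (m1 + 2 + t + C1) ≤ F)
    (hg' : (m1 + 2 + t + C0) * (m1 + C1) ≤ F) :
    (m1 + 1 + C0) * (m1 + 1 + t + C1) ≤ F + (t + 1) := by
  rcases le_or_gt C1 C0 with hc | hc
  · nlinarith
  · nlinarith

/-- Proposition: if `n_μ − 1 ≥ n_1 + 1` (with `μ ≠ 1`), then replacing `n_1` by `n_1 + 1`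
and `n_μ` by `n_μ − 1` increases `f_3` by at most `n_μ − (n_1 + 1)`. -/
theorem stmt_7 (r : ℕ) (n : Fin r → ℕ) (hpos : ∀ i, 0 < n i) (μ : Fin r)
    (hμ : μ ≠ ⟨0, μ.pos⟩) (h : n ⟨0, μ.pos⟩ + 2 ≤ n μ) :
    fT 3 (Function.update (Function.update n ⟨0, μ.pos⟩ (n ⟨0, μ.pos⟩ + 1)) μ (n μ - 1)) ≤
      fT 3 n + (n μ - (n ⟨0, μ.pos⟩ + 1)) := by
  set j : Fin r := ⟨0, μ.pos⟩ with hjdef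
  have hjμ : j ≠ μ := fun e => hμ e.symm
  set x : Fin r → ℕ := Function.update (Function.update n j (n j + 1)) μ (n μ - 1) with hxdef
  obtain ⟨t, ht⟩ : ∃ t, n μ = n j + 2 + t := ⟨n μ - (n j + 2), by omega⟩
  have hxj : x j = n j + 1 := by
    rw [hxdef, Function.update_of_ne hjμ, Function.update_self]
  have hxμ : x μ = n μ - 1 := by rw [hxdef, Function.update_self]
  have hxa : ∀ a, a ≠ j → a ≠ μ → x a = n a := fun a h1 h2 => by
    rw [hxdef, Function.update_of_ne h2, Function.update_of_ne h1]
  have hfT : ∀ (m : Fin r → ℕ) (gg : Fin r → Fin 2), Function.Surjective gg →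
      pairProdSum m gg ≤ fT 3 m := by
    intro m gg hgg
    rw [fT_three]
    exact Finset.le_sup (Finset.mem_filter.mpr ⟨Finset.mem_univ _, hgg⟩)
  have d10 : ((1 : Fin 2) = 0) = False := by simp
  have d01 : ((0 : Fin 2) = 1) = False := by simp
  rw [fT_three]
  apply Finset.sup_le
  intro g hg
  have hgs : Function.Surjective g := (Finset.mem_filter.mp hg).2
  set C : Fin 2 → ℕ :=
    fun i => ∑ a ∈ Finset.univ.filter (fun a => a ≠ j ∧ a ≠ μ ∧ g a = i), n a with hCdef
  have hC : ∀ i, (∑ a ∈ Finset.univ.filter (fun a => a ≠ j ∧ a ≠ μ ∧ g a = i), x a) = C i := by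
    intro i
    exact Finset.sum_congr rfl (fun a ha => by
      obtain ⟨h1, h2, -⟩ := (Finset.mem_filter.mp ha).2
      exact hxa a h1 h2)
  have hPSx : ∀ i, partSum x g i =
      (if g j = i then n j + 1 else 0) + (if g μ = i then n μ - 1 else 0) + C i := by
    intro i; rw [sum_split x g j μ hjμ i, hxj, hxμ, hC i]
  have hPSn : ∀ i, partSum n g i =
      (if g j = i then n j else 0) + (if g μ = i then n μ else 0) + C i :=
    fun i => sum_split n g j μ hjμ i
  rw [pairProd_two x g]
  by_cases hcase : g j = g μ
  · have heq : ∀ i, partSum x g i = partSum n g i := by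
      intro i; rw [hPSx i, hPSn i, hcase]; split_ifs <;> omega
    rw [heq 0, heq 1, ← pairProd_two n g]
    exact le_trans (hfT n g hgs) (Nat.le_add_right _ _)
  · set g' : Fin r → Fin 2 := Function.update (Function.update g j (g μ)) μ (g j) with hg'def
    have hg'j : g' j = g μ := by
      rw [hg'def, Function.update_of_ne hjμ, Function.update_self]
    have hg'μ : g' μ = g j := by rw [hg'def, Function.update_self]
    have hg'a : ∀ a, a ≠ j → a ≠ μ → g' a = g a := fun a h1 h2 => by
      rw [hg'def, Function.update_of_ne h2, Function.update_of_ne h1]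
    have two : ∀ a b c : Fin 2, a ≠ b → c ≠ a → c = b := by decide
    have hg's : Function.Surjective g' := by
      intro y
      rcases eq_or_ne y (g j) with rfl | hy
      · exact ⟨μ, hg'μ⟩
      · exact ⟨j, by rw [hg'j]; exact (two (g j) (g μ) y hcase hy).symm⟩
    have hCg' : ∀ i, (∑ a ∈ Finset.univ.filter (fun a => a ≠ j ∧ a ≠ μ ∧ g' a = i), n a)
        = C i := by
      intro i
      congr 1
      apply Finset.filter_congr
      intro a _
      by_cases h1 : a = j
      · simp [h1, hjμ]
      · by_cases h2 : a = μ
        · simp [h2, hjμ]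
        · rw [hg'a a h1 h2]
    have hPS' : ∀ i, partSum n g' i =
        (if g μ = i then n j else 0) + (if g j = i then n μ else 0) + C i := by
      intro i; rw [sum_split n g' j μ hjμ i, hg'j, hg'μ, hCg' i]
    have h2 : ∀ a b : Fin 2, a ≠ b → (a = 0 ∧ b = 1) ∨ (a = 1 ∧ b = 0) := by decide
    rcases h2 _ _ hcase with ⟨e0, e1⟩ | ⟨e0, e1⟩
    · have ex0 : partSum x g 0 = n j + 1 + C 0 := by
        rw [hPSx 0, e0, e1]; simp [d10]
      have ex1 : partSum x g 1 = n j + 1 + t + C 1 := by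
        rw [hPSx 1, e0, e1]; simp [d01]; omega
      have en0 : partSum n g 0 = n j + C 0 := by
        rw [hPSn 0, e0, e1]; simp [d10]
      have en1 : partSum n g 1 = n j + 2 + t + C 1 := by
        rw [hPSn 1, e0, e1]; simp [d01]; omega
      have en0' : partSum n g' 0 = n j + 2 + t + C 0 := by
        rw [hPS' 0, e0, e1]; simp [d10]; omega
      have en1' : partSum n g' 1 = n j + C 1 := by
        rw [hPS' 1, e0, e1]; simp [d01]
      have hg1 : (n j + C 0) * (n j + 2 + t + C 1) ≤ fT 3 n := by
        have := hfT n g hgs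
        rwa [pairProd_two n g, en0, en1] at this
      have hg2 : (n j + 2 + t + C 0) * (n j + C 1) ≤ fT 3 n := by
        have := hfT n g' hg's
        rwa [pairProd_two n g', en0', en1'] at this
      rw [ex0, ex1, show n μ - (n j + 1) = t + 1 from by omega]
      exact main_ineq (n j) t (C 0) (C 1) (fT 3 n) hg1 hg2
    · have ex0 : partSum x g 0 = n j + 1 + t + C 0 := by
        rw [hPSx 0, e0, e1]; simp [d10]; omega
      have ex1 : partSum x g 1 = n j + 1 + C 1 := by
        rw [hPSx 1, e0, e1]; simp [d01]
      have en0 : partSum n g 0 = n j + 2 + t + C 0 := by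
        rw [hPSn 0, e0, e1]; simp [d10]; omega
      have en1 : partSum n g 1 = n j + C 1 := by
        rw [hPSn 1, e0, e1]; simp [d01]
      have en0' : partSum n g' 0 = n j + C 0 := by
        rw [hPS' 0, e0, e1]; simp [d10]
      have en1' : partSum n g' 1 = n j + 2 + t + C 1 := by
        rw [hPS' 1, e0, e1]; simp [d01]; omega
      have hg1 : (n j + C 1) * (n j + 2 + t + C 0) ≤ fT 3 n := by
        have := hfT n g hgs
        rw [pairProd_two n g, en0, en1] at this
        rwa [mul_comm]
      have hg2 : (n j + 2 + t + C 1) * (n j + C 0) ≤ fT 3 n := by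
        have := hfT n g' hg's
        rw [pairProd_two n g', en0', en1'] at this
        rwa [mul_comm]
      rw [ex0, ex1, show n μ - (n j + 1) = t + 1 from by omega, mul_comm]
      exact main_ineq (n j) t (C 1) (C 0) (fT 3 n) hg1 hg2
end

section
/- Let n_1, n_2, ..., n_r be positive integers with n_1 + 2 ≤ n_i for every i with 2 ≤ i ≤ r. For two distinct indices i, j with 2 ≤ i, j ≤ r, f_3 applied to the multiset obtained from {n_1, ..., n_r} by replacing n_i with n_i − 1 and n_j with n_j − 1 is at most f_3(n_1, n_2, ..., n_r) − Σ_{m=1}^r n_m + max{n_1 + 2, n_i − n_1 + 1}. -/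
open SimpleGraph Finset

namespace Stmt8Aux

lemma fin2 : ∀ y : Fin 2, y = 0 ∨ y = 1 := by decide

lemma sum_update_filter {α : Type*} [DecidableEq α] (s : Finset α) (f : α → ℤ) (m : α) (v : ℤ) :
    ∑ a ∈ s, Function.update f m v a = (∑ a ∈ s, f a) + (if m ∈ s then v - f m else 0) := by
  by_cases h : m ∈ s
  · rw [Finset.sum_update_of_mem h, if_pos h, ← Finset.sum_erase_add s f h, Finset.erase_eq]
    ring
  · rw [Finset.sum_update_of_notMem h, if_neg h, add_zero]

/-- the integer part sum -/
def P {r : ℕ} (x : Fin r → ℕ) (g : Fin r → Fin 2) (k : Fin 2) : ℤ :=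
  ∑ a ∈ Finset.univ.filter (fun a => g a = k), (x a : ℤ)

lemma P_eq_partSum {r : ℕ} (x : Fin r → ℕ) (g : Fin r → Fin 2) (k : Fin 2) :
    ((partSum x g k : ℕ) : ℤ) = P x g k := by
  simp [partSum, P]

lemma pairProdSum_cast {r : ℕ} (x : Fin r → ℕ) (g : Fin r → Fin 2) :
    ((pairProdSum x g : ℕ) : ℤ) = P x g 0 * P x g 1 := by
  have hset : (Finset.univ.filter (fun p : Fin 2 × Fin 2 => p.1 < p.2))
      = {((0 : Fin 2), (1 : Fin 2))} := by decide
  rw [pairProdSum, hset, Finset.sum_singleton, Nat.cast_mul, P_eq_partSum, P_eq_partSum]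

lemma P_tot {r : ℕ} (x : Fin r → ℕ) (g : Fin r → Fin 2) :
    P x g 0 + P x g 1 = ∑ m, (x m : ℤ) := by
  rw [P, P, ← Finset.sum_filter_add_sum_filter_not Finset.univ (fun a => g a = 0)
      (fun a => (x a : ℤ))]
  congr 1
  apply Finset.sum_congr _ (fun _ _ => rfl)
  apply Finset.filter_congr
  intro a _
  rcases fin2 (g a) with h | h <;> simp [h]

lemma P_update_g {r : ℕ} (x : Fin r → ℕ) (g : Fin r → Fin 2) (m : Fin r) (c : Fin 2) (k : Fin 2) :
    P x (Function.update g m c) k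
      = P x g k + (if c = k then (x m : ℤ) else 0) - (if g m = k then (x m : ℤ) else 0) := by
  rw [P, Finset.sum_filter, P, Finset.sum_filter]
  have hfun : (fun a => if Function.update g m c a = k then (x a : ℤ) else 0)
      = Function.update (fun a => if g a = k then (x a : ℤ) else 0) m
          (if c = k then (x m : ℤ) else 0) := by
    funext a
    by_cases ha : a = m <;> simp [Function.update, ha]
  rw [hfun, sum_update_filter]
  simp only [Finset.mem_univ, if_true]
  ring

lemma pairProdSum_le_fT {r : ℕ} (x : Fin r → ℕ) (g : Fin r → Fin 2)
    (hg : Function.Surjective g) : pairProdSum x g ≤ fT 3 x :=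
  Finset.le_sup (Finset.mem_filter.mpr ⟨Finset.mem_univ _, hg⟩)

lemma P_n' {r : ℕ} (n : Fin r → ℕ) (g : Fin r → Fin 2) (i j : Fin r) (hij : i ≠ j)
    (hni : 1 ≤ n i) (hnj : 1 ≤ n j) (k : Fin 2) :
    P (Function.update (Function.update n i (n i - 1)) j (n j - 1)) g k
      = P n g k - (if g i = k then 1 else 0) - (if g j = k then 1 else 0) := by
  have hcast : ∀ a, ((Function.update (Function.update n i (n i - 1)) j (n j - 1) a : ℕ) : ℤ)
      = Function.update (Function.update (fun a => (n a : ℤ)) i ((n i : ℤ) - 1)) j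
          ((n j : ℤ) - 1) a := by
    intro a
    by_cases h1 : a = j
    · subst h1; simp [Function.update_self, Nat.cast_sub hnj]
    · by_cases h2 : a = i
      · subst h2
        rw [Function.update_of_ne h1, Function.update_of_ne h1, Function.update_self,
          Function.update_self, Nat.cast_sub hni]
        simp
      · rw [Function.update_of_ne h1, Function.update_of_ne h2, Function.update_of_ne h1,
          Function.update_of_ne h2]
  rw [P, Finset.sum_congr rfl (fun a _ => hcast a), sum_update_filter, sum_update_filter]
  rw [Function.update_of_ne hij.symm]
  simp only [Finset.mem_filter, Finset.mem_univ, true_and]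
  rw [P]
  split_ifs <;> ring

end Stmt8Aux

namespace Stmt8Aux2
open Stmt8Aux

lemma fin2' : ∀ (c k k' : Fin 2), k ≠ k' → c = k ∨ c = k' := by decide

lemma prod_le {r : ℕ} (k k' : Fin 2) (hkk' : k ≠ k') (n : Fin r → ℕ) (g : Fin r → Fin 2)
    (hg : Function.Surjective g) : P n g k * P n g k' ≤ (fT 3 n : ℤ) := by
  have h1 := pairProdSum_le_fT n g hg
  have h2 := pairProdSum_cast n g
  rcases fin2' k 0 1 (by decide) with rfl | rfl <;>
    rcases fin2' k' 0 1 (by decide) with rfl | rfl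
  · exact absurd rfl hkk'
  · rw [← h2]; exact_mod_cast h1
  · rw [mul_comm, ← h2]; exact_mod_cast h1
  · exact absurd rfl hkk'

lemma caseB {r : ℕ} (n : Fin r → ℕ) (g : Fin r → Fin 2) (i j idx0 : Fin r) (k k' : Fin 2)
    (hkk' : k ≠ k') (hgi : g i = k) (hgj : g j = k) (hij : i ≠ j) (hi : i ≠ idx0)
    (hj : j ≠ idx0)
    (h0i : (n idx0 : ℤ) + 2 ≤ (n i : ℤ)) (h0j : (n idx0 : ℤ) + 2 ≤ (n j : ℤ))
    (h0 : 1 ≤ (n idx0 : ℤ)) (hg : Function.Surjective g) (M : ℤ)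
    (hM1 : (n idx0 : ℤ) + 2 ≤ M) (hM2 : (n i : ℤ) - (n idx0 : ℤ) + 1 ≤ M) :
    (P n g k - 2) * P n g k' ≤ (fT 3 n : ℤ) - (P n g k + P n g k') + M := by
  have F1 : P n g k * P n g k' ≤ (fT 3 n : ℤ) := prod_le k k' hkk' n g hg
  by_cases hE : P n g k - P n g k' ≤ M
  · nlinarith [F1, hE]
  push_neg at hE
  by_cases hg0 : g idx0 = k
  · -- move idx0 to the other part
    have hsurj2 : Function.Surjective (Function.update g idx0 k') := by
      intro c
      rcases fin2' c k k' hkk' with rfl | rfl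
      · exact ⟨i, by rw [Function.update_of_ne hi, hgi]⟩
      · exact ⟨idx0, Function.update_self _ _ _⟩
    have F3 : (P n g k - (n idx0 : ℤ)) * (P n g k' + (n idx0 : ℤ)) ≤ (fT 3 n : ℤ) := by
      have hle := prod_le k k' hkk' n _ hsurj2
      rw [P_update_g, P_update_g, if_neg (Ne.symm hkk'), if_pos hg0, if_pos rfl,
        if_neg (hg0 ▸ hkk' : ¬ g idx0 = k')] at hle
      calc (P n g k - (n idx0 : ℤ)) * (P n g k' + (n idx0 : ℤ))
          = (P n g k + 0 - (n idx0 : ℤ)) * (P n g k' + (n idx0 : ℤ) - 0) := by ring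
        _ ≤ _ := hle
    have key : ((n idx0 : ℤ) - 1) * ((P n g k - P n g k') - ((n idx0 : ℤ) + 3)) ≥ 0 :=
      mul_nonneg (by linarith) (by linarith)
    nlinarith [F3, key, hM1, h0, hE]
  · have hg0' : g idx0 = k' := by
      rcases fin2' (g idx0) k k' hkk' with hh | hh
      · exact absurd hh hg0
      · exact hh
    -- swap i and idx0
    have hsurj3 : Function.Surjective (Function.update (Function.update g i k') idx0 k) := by
      intro c
      rcases fin2' c k k' hkk' with rfl | rfl
      · exact ⟨idx0, Function.update_self _ _ _⟩
      · exact ⟨i, by rw [Function.update_of_ne hi, Function.update_self]⟩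
    have F4 : (P n g k - (n i : ℤ) + (n idx0 : ℤ)) * (P n g k' + (n i : ℤ) - (n idx0 : ℤ))
        ≤ (fT 3 n : ℤ) := by
      have hle := prod_le k k' hkk' n _ hsurj3
      rw [P_update_g, P_update_g, P_update_g, P_update_g,
        Function.update_of_ne (Ne.symm hi), hg0', hgi] at hle
      rw [if_pos rfl, if_pos rfl, if_neg (Ne.symm hkk'), if_neg (Ne.symm hkk'),
        if_neg hkk', if_pos rfl, if_pos rfl, if_neg hkk'] at hle
      calc (P n g k - (n i : ℤ) + (n idx0 : ℤ)) * (P n g k' + (n i : ℤ) - (n idx0 : ℤ))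
          = (P n g k + 0 - (n i : ℤ) + (n idx0 : ℤ) - 0)
            * (P n g k' + (n i : ℤ) - 0 + 0 - (n idx0 : ℤ)) := by ring
        _ ≤ _ := hle
    have key : ((n i : ℤ) - (n idx0 : ℤ) - 1)
        * ((P n g k - P n g k') - ((n i : ℤ) - (n idx0 : ℤ) + 2)) ≥ 0 :=
      mul_nonneg (by linarith) (by linarith)
    nlinarith [F4, key, hM1, hM2, h0, hE]

end Stmt8Aux2

namespace Stmt8Aux3
open Stmt8Aux Stmt8Aux2

lemma main {r : ℕ} (n : Fin r → ℕ) (hpos : ∀ m, 0 < n m) (i j idx0 : Fin r)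
    (hij : i ≠ j) (hi : i ≠ idx0) (hj : j ≠ idx0)
    (h : ∀ m, m ≠ idx0 → n idx0 + 2 ≤ n m)
    (g : Fin r → Fin 2) (hg : Function.Surjective g) :
    ((pairProdSum (Function.update (Function.update n i (n i - 1)) j (n j - 1)) g : ℕ) : ℤ) ≤
      (fT 3 n : ℤ) - (∑ m, (n m : ℤ)) +
        max ((n idx0 : ℤ) + 2) ((n i : ℤ) - (n idx0 : ℤ) + 1) := by
  have h0i : (n idx0 : ℤ) + 2 ≤ (n i : ℤ) := by exact_mod_cast h i hi
  have h0j : (n idx0 : ℤ) + 2 ≤ (n j : ℤ) := by exact_mod_cast h j hj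
  have h0 : 1 ≤ (n idx0 : ℤ) := by exact_mod_cast hpos idx0
  set M := max ((n idx0 : ℤ) + 2) ((n i : ℤ) - (n idx0 : ℤ) + 1) with hMdef
  have hM1 : (n idx0 : ℤ) + 2 ≤ M := le_max_left _ _
  have hM2 : (n i : ℤ) - (n idx0 : ℤ) + 1 ≤ M := le_max_right _ _
  have hni : 1 ≤ n i := hpos i
  have hnj : 1 ≤ n j := hpos j
  rw [pairProdSum_cast, P_n' n g i j hij hni hnj, P_n' n g i j hij hni hnj, ← P_tot n g]
  by_cases hgij : g i = g j
  · rcases fin2' (g j) (0 : Fin 2) 1 (by decide) with hk | hk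
    · have hgi0 : g i = 0 := hgij.trans hk
      have hcb := caseB n g i j idx0 0 1 (by decide) hgi0 hk hij hi hj h0i h0j h0 hg M hM1 hM2
      rw [hgi0, hk]
      norm_num
      calc (P n g 0 - 1 - 1) * P n g 1 = (P n g 0 - 2) * P n g 1 := by ring
        _ ≤ _ := hcb
    · have hgi1 : g i = 1 := hgij.trans hk
      have hcb := caseB n g i j idx0 1 0 (by decide) hgi1 hk hij hi hj h0i h0j h0 hg M hM1 hM2
      rw [hgi1, hk]
      norm_num
      calc P n g 0 * (P n g 1 - 1 - 1) = (P n g 1 - 2) * P n g 0 := by ring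
        _ ≤ (fT 3 n : ℤ) - (P n g 1 + P n g 0) + M := hcb
        _ = (fT 3 n : ℤ) - (P n g 0 + P n g 1) + M := by ring
  · have hs : ∀ kk : Fin 2,
        (if g i = kk then (1 : ℤ) else 0) + (if g j = kk then 1 else 0) = 1 := by
      have hd : ∀ y z kk : Fin 2, y ≠ z →
          (if y = kk then (1 : ℤ) else 0) + (if z = kk then 1 else 0) = 1 := by decide
      exact fun kk => hd _ _ kk hgij
    have F1 : P n g 0 * P n g 1 ≤ (fT 3 n : ℤ) := prod_le 0 1 (by decide) n g hg
    have hM3 : (3 : ℤ) ≤ M := by linarith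
    rw [sub_sub, sub_sub, hs 0, hs 1]
    nlinarith [F1, hM3]

end Stmt8Aux3

/-- Proposition: if `n_1 + 2 ≤ n_m` for all `m ≥ 2`, and `i ≠ j` are indices with
`i, j ≥ 2`, then replacing `n_i` by `n_i − 1` and `n_j` by `n_j − 1` yields
`f_3 ≤ f_3(n_1,…,n_r) − Σ_m n_m + max{n_1 + 2, n_i − n_1 + 1}`. -/
theorem stmt_8 (r : ℕ) (n : Fin r → ℕ) (hpos : ∀ m, 0 < n m) (i j : Fin r)
    (hij : i ≠ j) (hi : i ≠ ⟨0, i.pos⟩) (hj : j ≠ ⟨0, i.pos⟩)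
    (h : ∀ m : Fin r, m ≠ ⟨0, i.pos⟩ → n ⟨0, i.pos⟩ + 2 ≤ n m) :
    (fT 3 (Function.update (Function.update n i (n i - 1)) j (n j - 1)) : ℤ) ≤
      (fT 3 n : ℤ) - (∑ m, (n m : ℤ)) +
        max ((n ⟨0, i.pos⟩ : ℤ) + 2) ((n i : ℤ) - (n ⟨0, i.pos⟩ : ℤ) + 1) := by

  have hne : (Finset.univ.filter (fun g : Fin r → Fin 2 => Function.Surjective g)).Nonempty := by
    refine ⟨fun a => if a = i then 1 else 0, Finset.mem_filter.mpr ⟨Finset.mem_univ _, ?_⟩⟩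
    intro c
    rcases Stmt8Aux2.fin2' c 0 1 (by decide) with rfl | rfl
    · exact ⟨j, by simp [hij.symm]⟩
    · exact ⟨i, by simp⟩
  obtain ⟨g₀, hmem, hsup⟩ := Finset.exists_mem_eq_sup _ hne
      (fun g => pairProdSum (Function.update (Function.update n i (n i - 1)) j (n j - 1)) g)
  have hg₀ : Function.Surjective g₀ := (Finset.mem_filter.mp hmem).2
  have heq : fT 3 (Function.update (Function.update n i (n i - 1)) j (n j - 1))
      = pairProdSum (Function.update (Function.update n i (n i - 1)) j (n j - 1)) g₀ := hsup
  rw [heq]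
  exact Stmt8Aux3.main n hpos i j ⟨0, i.pos⟩ hij hi hj h g₀ hg₀
end

section
/- Let r ≥ 2 and let x_1 ≤ x_2 ≤ ... ≤ x_r be positive integers. Then f_r(x_1, x_2, ..., x_r) = (Σ_{1 ≤ i < j ≤ r} x_i x_j) − x_1 x_2. -/
open SimpleGraph Finset

lemma pps_step1 {r s : ℕ} (x : Fin r → ℕ) (g : Fin r → Fin s) :
    pairProdSum x g =
      ∑ q ∈ Finset.univ.filter (fun q : Fin r × Fin r => g q.1 < g q.2), x q.1 * x q.2 := by
  rw [← Finset.sum_fiberwise_of_maps_to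
    (g := fun q : Fin r × Fin r => (g q.1, g q.2))
    (t := Finset.univ.filter (fun p : Fin s × Fin s => p.1 < p.2))
    (fun q hq => by simpa using (Finset.mem_filter.mp hq).2)]
  unfold pairProdSum partSum
  refine Finset.sum_congr rfl fun p hp => ?_
  have hp' : p.1 < p.2 := (Finset.mem_filter.mp hp).2
  rw [Finset.sum_mul_sum, ← Finset.sum_product']
  refine Finset.sum_congr ?_ fun q _ => rfl
  rw [← Finset.filter_product]
  ext q
  simp only [Finset.mem_filter, Finset.mem_product, Finset.mem_univ, true_and, Prod.ext_iff]
  constructor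
  · rintro ⟨h1, h2⟩; exact ⟨h1 ▸ h2 ▸ hp', h1, h2⟩
  · rintro ⟨_, h1, h2⟩; exact ⟨h1, h2⟩

lemma pps_step2 {r s : ℕ} (x : Fin r → ℕ) (g : Fin r → Fin s) :
    pairProdSum x g =
      ∑ q ∈ Finset.univ.filter (fun q : Fin r × Fin r => q.1 < q.2 ∧ g q.1 ≠ g q.2),
        x q.1 * x q.2 := by
  rw [pps_step1]
  refine Finset.sum_nbij' (fun q => if q.1 < q.2 then q else (q.2, q.1))
    (fun q => if g q.1 < g q.2 then q else (q.2, q.1)) ?_ ?_ ?_ ?_ ?_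
  · intro q hq
    have h : g q.1 < g q.2 := (Finset.mem_filter.mp hq).2
    have hne : q.1 ≠ q.2 := fun e => absurd (e ▸ h) (lt_irrefl _)
    rcases lt_or_gt_of_ne hne with h1 | h1
    · simp [h1, h.ne]
    · simp [not_lt_of_gt h1, h1, h.ne']
  · intro q hq
    obtain ⟨h1, h2⟩ := (Finset.mem_filter.mp hq).2
    rcases lt_or_gt_of_ne h2 with h3 | h3
    · simp [h3]
    · simp [not_lt_of_gt h3, h3]
  · intro q hq
    have h : g q.1 < g q.2 := (Finset.mem_filter.mp hq).2
    have hne : q.1 ≠ q.2 := fun e => absurd (e ▸ h) (lt_irrefl _)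
    rcases lt_or_gt_of_ne hne with h1 | h1
    · simp [h1, h]
    · simp [not_lt_of_gt h1, not_lt_of_gt h, h]
  · intro q hq
    obtain ⟨h1, h2⟩ := (Finset.mem_filter.mp hq).2
    rcases lt_or_gt_of_ne h2 with h3 | h3
    · simp [h3, h1]
    · simp [not_lt_of_gt h3, not_lt_of_gt h1, h1]
  · intro q hq
    split <;> simp [Nat.mul_comm]

lemma pps_step3 {r s : ℕ} (x : Fin r → ℕ) (g : Fin r → Fin s) :
    pairProdSum x g =
      (∑ p ∈ Finset.univ.filter (fun p : Fin r × Fin r => p.1 < p.2), x p.1 * x p.2)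
        - ∑ q ∈ Finset.univ.filter (fun q : Fin r × Fin r => q.1 < q.2 ∧ g q.1 = g q.2),
            x q.1 * x q.2 := by
  rw [pps_step2]
  have key := Finset.sum_filter_add_sum_filter_not
    (Finset.univ.filter (fun q : Fin r × Fin r => q.1 < q.2))
    (fun q => g q.1 = g q.2) (fun q => x q.1 * x q.2)
  rw [Finset.filter_filter, Finset.filter_filter] at key
  simp only [ne_eq]
  omega

/-- For `r ≥ 2` and `x_1 ≤ x_2 ≤ ⋯ ≤ x_r` positive,
`f_r(x_1,…,x_r) = (Σ_{i<j} x_i x_j) − x_1 x_2`. -/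
theorem stmt_9 (r : ℕ) (hr : 2 ≤ r) (x : Fin r → ℕ) (hpos : ∀ i, 0 < x i)
    (hmono : Monotone x) :
    fT r x =
      (∑ p ∈ Finset.univ.filter (fun p : Fin r × Fin r => p.1 < p.2), x p.1 * x p.2)
        - x ⟨0, by omega⟩ * x ⟨1, by omega⟩ := by
  set T := ∑ p ∈ Finset.univ.filter (fun p : Fin r × Fin r => p.1 < p.2), x p.1 * x p.2 with hT
  apply le_antisymm
  · apply Finset.sup_le
    intro g hg
    have hsurj : Function.Surjective g := (Finset.mem_filter.mp hg).2
    rw [pps_step3]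
    apply Nat.sub_le_sub_left
    have hcard : Fintype.card (Fin (r - 1)) < Fintype.card (Fin r) := by simp; omega
    obtain ⟨a, b, hab, heq⟩ := Fintype.exists_ne_map_eq_of_card_lt g hcard
    wlog hlt : a < b generalizing a b
    · exact this b a hab.symm heq.symm (by omega)
    have hmem : (a, b) ∈ Finset.univ.filter
        (fun q : Fin r × Fin r => q.1 < q.2 ∧ g q.1 = g q.2) := by
      simp [hlt, heq]
    calc x ⟨0, by omega⟩ * x ⟨1, by omega⟩ ≤ x a * x b := by
          apply Nat.mul_le_mul
          · exact hmono (Fin.le_def.mpr (Nat.zero_le _))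
          · exact hmono (Fin.le_def.mpr (by show (1:ℕ) ≤ b.val; have := Fin.lt_def.mp hlt; omega))
      _ ≤ _ := Finset.single_le_sum (f := fun q : Fin r × Fin r => x q.1 * x q.2)
            (fun q _ => Nat.zero_le _) hmem
  · set g0 : Fin r → Fin (r - 1) := fun a => ⟨a.val - 1, by omega⟩ with hg0
    have hsurj : Function.Surjective g0 := by
      intro j
      refine ⟨⟨j.val + 1, by omega⟩, ?_⟩
      simp [hg0]
    have hmem : g0 ∈ Finset.univ.filter
        (fun g : Fin r → Fin (r - 1) => Function.Surjective g) := by simp [hsurj]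
    have hval : pairProdSum x g0 = T - x ⟨0, by omega⟩ * x ⟨1, by omega⟩ := by
      rw [pps_step3]
      congr 1
      have hset : Finset.univ.filter
          (fun q : Fin r × Fin r => q.1 < q.2 ∧ g0 q.1 = g0 q.2)
          = {((⟨0, by omega⟩ : Fin r), (⟨1, by omega⟩ : Fin r))} := by
        ext q
        simp only [Finset.mem_filter, Finset.mem_univ, true_and, Finset.mem_singleton,
          hg0, Fin.ext_iff, Prod.ext_iff, Fin.lt_iff_val_lt_val]
        omega
      rw [hset, Finset.sum_singleton]
    calc T - x ⟨0, by omega⟩ * x ⟨1, by omega⟩ = pairProdSum x g0 := hval.symm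
      _ ≤ _ := Finset.le_sup hmem
end

section
/- Let a, b, c, d be positive integers with a ≤ b ≤ c ≤ d. If d ≥ b + c then f_3(a,b,c,d) = d(a+b+c), and if d ≤ b + c then f_3(a,b,c,d) = (a+d)(b+c). -/
open SimpleGraph Finset

set_option maxHeartbeats 1000000

lemma ps4 (x : Fin 4 → ℕ) (g : Fin 4 → Fin 2) (i : Fin 2) :
    partSum x g i = (if g 0 = i then x 0 else 0) + (if g 1 = i then x 1 else 0)
      + (if g 2 = i then x 2 else 0) + (if g 3 = i then x 3 else 0) := by
  unfold partSum; rw [Finset.sum_filter, Fin.sum_univ_four]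

lemma pps4 (x : Fin 4 → ℕ) (g : Fin 4 → Fin 2) :
    pairProdSum x g = partSum x g 0 * partSum x g 1 := by
  unfold pairProdSum
  rw [show (Finset.univ.filter (fun p : Fin 2 × Fin 2 => p.1 < p.2))
      = {((0 : Fin 2), (1 : Fin 2))} from by decide]
  simp

lemma fin2cases (i : Fin 2) : i = 0 ∨ i = 1 := by revert i; decide

lemma upper4 (a b c d T : ℕ)
    (h1 : a * (b + c + d) ≤ T) (h2 : b * (a + c + d) ≤ T) (h3 : c * (a + b + d) ≤ T)
    (h4 : d * (a + b + c) ≤ T) (h5 : (a + b) * (c + d) ≤ T) (h6 : (a + c) * (b + d) ≤ T)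
    (h7 : (a + d) * (b + c) ≤ T)
    (g : Fin 4 → Fin 2) (hgs : Function.Surjective g) :
    pairProdSum ![a, b, c, d] g ≤ T := by
  rw [pps4, ps4, ps4]
  rcases fin2cases (g 0) with h0 | h0 <;> rcases fin2cases (g 1) with h1' | h1' <;>
    rcases fin2cases (g 2) with h2' | h2' <;> rcases fin2cases (g 3) with h3' | h3' <;>
    simp [h0, h1', h2', h3'] <;>
    first
      | ((exfalso; obtain ⟨y, hy⟩ := hgs 1; fin_cases y <;> simp_all); done)
      | ((exfalso; obtain ⟨y, hy⟩ := hgs 0; fin_cases y <;> simp_all); done)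
      | nlinarith [h1, h2, h3, h4, h5, h6, h7]

lemma lower4 (a b c d : ℕ) (g : Fin 4 → Fin 2) (hgs : Function.Surjective g) :
    pairProdSum ![a, b, c, d] g ≤ fT 3 ![a, b, c, d] := by
  apply Finset.le_sup (f := fun g => pairProdSum ![a, b, c, d] g)
  rw [Finset.mem_filter]
  exact ⟨Finset.mem_univ _, hgs⟩

/-- For positive `a ≤ b ≤ c ≤ d`: if `d ≥ b + c` then `f_3(a,b,c,d) = d(a+b+c)`, and if
`d ≤ b + c` then `f_3(a,b,c,d) = (a+d)(b+c)`. -/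
theorem stmt_10 (a b c d : ℕ) (ha : 0 < a) (hab : a ≤ b) (hbc : b ≤ c) (hcd : c ≤ d) :
    (b + c ≤ d → fT 3 ![a, b, c, d] = d * (a + b + c)) ∧
    (d ≤ b + c → fT 3 ![a, b, c, d] = (a + d) * (b + c)) := by
  have hac : a ≤ c := hab.trans hbc
  have hbd : b ≤ d := hbc.trans hcd
  have had : a ≤ d := hac.trans hcd
  have hval1 : pairProdSum ![a, b, c, d] (![0, 0, 0, 1] : Fin 4 → Fin 2) = d * (a + b + c) := by
    rw [pps4, ps4, ps4]; norm_num [Matrix.cons_val_zero, Matrix.cons_val_one, Matrix.cons_val_two, Matrix.cons_val_three, Matrix.vecHead, Matrix.vecTail]; ring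
  have hval2 : pairProdSum ![a, b, c, d] (![0, 1, 1, 0] : Fin 4 → Fin 2) = (a + d) * (b + c) := by
    rw [pps4, ps4, ps4]; norm_num [Matrix.cons_val_zero, Matrix.cons_val_one, Matrix.cons_val_two, Matrix.cons_val_three, Matrix.vecHead, Matrix.vecTail]
  constructor <;> intro hd <;> apply le_antisymm
  · apply Finset.sup_le
    intro g hg
    rw [Finset.mem_filter] at hg
    refine upper4 a b c d _ ?_ ?_ ?_ ?_ ?_ ?_ ?_ g hg.2 <;> nlinarith
  · rw [← hval1]; exact lower4 a b c d ![0, 0, 0, 1] (by decide)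
  · apply Finset.sup_le
    intro g hg
    rw [Finset.mem_filter] at hg
    refine upper4 a b c d _ ?_ ?_ ?_ ?_ ?_ ?_ ?_ g hg.2 <;> nlinarith
  · rw [← hval2]; exact lower4 a b c d ![0, 1, 1, 0] (by decide)
end

section
/- Let k ≥ 2 and let G be a graph containing no k pairwise vertex-disjoint triangles. Let u_2 and u_3 be adjacent vertices of G such that, for each i ∈ {2,3}, the graph G − u_i contains k − 1 pairwise vertex-disjoint triangles. Let A ⊆ V(G) satisfy |N_G(u_2) ∩ N_G(u_3) ∩ A| ≥ 6(k−1) + 1. Then there exists a vertex u_0 ∈ A ∩ N_G(u_2) ∩ N_G(u_3) such that |N_G(u_0) ∩ N_G(u_2)| ≤ 3(k−1) and |N_G(u_0) ∩ N_G(u_3)| ≤ 3(k−1). -/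
open SimpleGraph Finset

lemma kCliques_adj {k t : ℕ} {p q : Fin k × Fin t} :
    (kCliques k t).Adj p q ↔ p ≠ q ∧ p.1 = q.1 := by
  rw [kCliques, SimpleGraph.fromRel_adj]
  constructor
  · rintro ⟨hne, h | h⟩
    · exact ⟨hne, h⟩
    · exact ⟨hne, h.symm⟩
  · rintro ⟨hne, h⟩
    exact ⟨hne, Or.inl h⟩

lemma add_triangle {α : Type*} {m : ℕ} (G : SimpleGraph α) (f : Fin m × Fin 3 → α)
    (hf : Function.Injective f)
    (hadjf : ∀ p q : Fin m × Fin 3, p ≠ q → p.1 = q.1 → G.Adj (f p) (f q))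
    (a b c : α) (hab : G.Adj a b) (hac : G.Adj a c) (hbc : G.Adj b c)
    (ha : a ∉ Set.range f) (hb : b ∉ Set.range f) (hc : c ∉ Set.range f) :
    HasCopy G (kCliques (m + 1) 3) := by
  classical
  set v : Fin 3 → α := ![a, b, c] with hv
  have hvnr : ∀ j : Fin 3, v j ∉ Set.range f := by
    intro j
    fin_cases j <;>
      simp only [v, Matrix.cons_val_zero, Matrix.cons_val_one, Matrix.head_cons,
        Matrix.cons_val_two, Matrix.tail_cons] <;>
      assumption
  have hvinj : Function.Injective v := by
    have h1 : a ≠ b := hab.ne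
    have h2 : a ≠ c := hac.ne
    have h3 : b ≠ c := hbc.ne
    intro i j hij
    fin_cases i <;> fin_cases j <;> simp_all [v]
  have hvadj : ∀ i j : Fin 3, i ≠ j → G.Adj (v i) (v j) := by
    intro i j hij
    fin_cases i <;> fin_cases j <;>
      simp [v] at hij ⊢ <;>
      first
        | exact hab | exact hac | exact hbc
        | exact hab.symm | exact hac.symm | exact hbc.symm
  refine ⟨fun p => if h : (p.1 : ℕ) < m then f (⟨p.1, h⟩, p.2) else v p.2, ?_, ?_⟩
  · intro p q hpq
    by_cases hp : (p.1 : ℕ) < m <;> by_cases hq : (q.1 : ℕ) < m <;>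
        simp only [hp, hq, dif_pos, dif_neg, not_false_iff] at hpq
    · have h1 : (p.1 : ℕ) = (q.1 : ℕ) :=
        congrArg (fun x : Fin m × Fin 3 => (x.1 : ℕ)) (hf hpq)
      have h2 : p.2 = q.2 := congrArg (fun x : Fin m × Fin 3 => x.2) (hf hpq)
      exact Prod.ext (Fin.ext h1) h2
    · exact absurd ⟨_, hpq⟩ (hvnr q.2)
    · exact absurd ⟨_, hpq.symm⟩ (hvnr p.2)
    · have h2 : p.2 = q.2 := hvinj hpq
      have h1 : p.1 = q.1 := by
        have := p.1.isLt; have := q.1.isLt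
        apply Fin.ext; omega
      exact Prod.ext h1 h2
  · intro p q hpq
    rw [kCliques_adj] at hpq
    obtain ⟨hne, h1⟩ := hpq
    have h2 : p.2 ≠ q.2 := fun h => hne (Prod.ext h1 h)
    by_cases hp : (p.1 : ℕ) < m
    · have hq : (q.1 : ℕ) < m := h1 ▸ hp
      simp only [hp, hq, dif_pos]
      apply hadjf
      · intro h
        exact h2 (congrArg (fun x : Fin m × Fin 3 => x.2) h)
      · exact Fin.ext (congrArg Fin.val h1 : (p.1 : ℕ) = (q.1 : ℕ))
    · have hq : ¬ (q.1 : ℕ) < m := h1 ▸ hp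
      simp only [hp, hq, dif_neg, not_false_iff]
      exact hvadj _ _ h2

/-- Claim: let `G` contain no `k` disjoint triangles, let `u_2 u_3` be an edge such that
both `G − u_2` and `G − u_3` contain `k−1` disjoint triangles, and let `A` be a vertex set
with `|N(u_2) ∩ N(u_3) ∩ A| ≥ 6(k−1)+1`. Then some `u_0 ∈ A ∩ N(u_2) ∩ N(u_3)` satisfies
`|N(u_0) ∩ N(u_i)| ≤ 3(k−1)` for `i = 2, 3`. -/
theorem stmt_12 {α : Type*} [Fintype α] (k : ℕ) (hk : 2 ≤ k) (G : SimpleGraph α)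
    (hG : ¬ HasCopy G (kCliques k 3)) (u2 u3 : α) (hadj : G.Adj u2 u3)
    (h2 : HasCopy (G.induce ({u2}ᶜ : Set α)) (kCliques (k - 1) 3))
    (h3 : HasCopy (G.induce ({u3}ᶜ : Set α)) (kCliques (k - 1) 3))
    (A : Set α)
    (hA : 6 * (k - 1) + 1 ≤ (G.neighborSet u2 ∩ G.neighborSet u3 ∩ A).ncard) :
    ∃ u0 ∈ A ∩ G.neighborSet u2 ∩ G.neighborSet u3,
      (G.neighborSet u0 ∩ G.neighborSet u2).ncard ≤ 3 * (k - 1) ∧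
      (G.neighborSet u0 ∩ G.neighborSet u3).ncard ≤ 3 * (k - 1) := by
  classical
  obtain ⟨m, rfl⟩ : ∃ m, k = m + 1 := ⟨k - 1, by omega⟩
  simp only [Nat.add_sub_cancel] at h2 h3 hA ⊢
  obtain ⟨f2', hf2inj', hf2adj'⟩ := h2
  obtain ⟨f3', hf3inj', hf3adj'⟩ := h3
  set f2 : Fin m × Fin 3 → α := fun p => (f2' p : α) with hf2def
  set f3 : Fin m × Fin 3 → α := fun p => (f3' p : α) with hf3def
  have hf2inj : Function.Injective f2 := fun p q h => hf2inj' (Subtype.ext h)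
  have hf3inj : Function.Injective f3 := fun p q h => hf3inj' (Subtype.ext h)
  have hf2adj : ∀ p q : Fin m × Fin 3, p ≠ q → p.1 = q.1 → G.Adj (f2 p) (f2 q) :=
    fun p q hne h1 => hf2adj' (kCliques_adj.mpr ⟨hne, h1⟩)
  have hf3adj : ∀ p q : Fin m × Fin 3, p ≠ q → p.1 = q.1 → G.Adj (f3 p) (f3 q) :=
    fun p q hne h1 => hf3adj' (kCliques_adj.mpr ⟨hne, h1⟩)
  have hu2r : u2 ∉ Set.range f2 := by
    rintro ⟨p, hp⟩
    have := (f2' p).2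
    simp only [Set.mem_compl_iff, Set.mem_singleton_iff] at this
    exact this hp
  have hu3r : u3 ∉ Set.range f3 := by
    rintro ⟨p, hp⟩
    have := (f3' p).2
    simp only [Set.mem_compl_iff, Set.mem_singleton_iff] at this
    exact this hp
  set S2 : Finset α := Finset.image f2 Finset.univ with hS2
  set S3 : Finset α := Finset.image f3 Finset.univ with hS3
  have hr2 : Set.range f2 = (↑S2 : Set α) := by ext x; simp [hS2]
  have hr3 : Set.range f3 = (↑S3 : Set α) := by ext x; simp [hS3]
  have hS2card : S2.card ≤ 3 * m := by
    have h := Finset.card_image_le (f := f2) (s := Finset.univ)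
    simpa [Fintype.card_prod, Nat.mul_comm] using h
  have hS3card : S3.card ≤ 3 * m := by
    have h := Finset.card_image_le (f := f3) (s := Finset.univ)
    simpa [Fintype.card_prod, Nat.mul_comm] using h
  have hnotsub : ¬ (G.neighborSet u2 ∩ G.neighborSet u3 ∩ A) ⊆ (↑(S2 ∪ S3) : Set α) := by
    intro hsub
    have h1 := Set.ncard_le_ncard hsub (Set.toFinite _)
    rw [Set.ncard_coe_finset] at h1
    have h2 := Finset.card_union_le S2 S3
    omega
  obtain ⟨u0, hu0B, hu0T⟩ := Set.not_subset.mp hnotsub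
  have hu0S2 : u0 ∉ (↑S2 : Set α) := fun h => hu0T (by simp [Finset.mem_union]; left; exact_mod_cast h)
  have hu0S3 : u0 ∉ (↑S3 : Set α) := fun h => hu0T (by simp [Finset.mem_union]; right; exact_mod_cast h)
  obtain ⟨⟨hu0n2, hu0n3⟩, hu0A⟩ := hu0B
  have hadj2 : G.Adj u2 u0 := hu0n2
  have hadj3 : G.Adj u3 u0 := hu0n3
  refine ⟨u0, ⟨⟨hu0A, hu0n2⟩, hu0n3⟩, ?_, ?_⟩
  · by_contra hcon
    push_neg at hcon
    have hnotsub2 : ¬ (G.neighborSet u0 ∩ G.neighborSet u2) ⊆ (↑S2 : Set α) := by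
      intro hsub
      have h1 := Set.ncard_le_ncard hsub (Set.toFinite _)
      rw [Set.ncard_coe_finset] at h1
      omega
    obtain ⟨w, hwmem, hwS2⟩ := Set.not_subset.mp hnotsub2
    obtain ⟨hw0, hw2⟩ := hwmem
    have hw0' : G.Adj u0 w := hw0
    have hw2' : G.Adj u2 w := hw2
    exact hG (add_triangle G f2 hf2inj hf2adj u0 u2 w hadj2.symm hw0' hw2'
      (hr2 ▸ hu0S2) hu2r (hr2 ▸ hwS2))
  · by_contra hcon
    push_neg at hcon
    have hnotsub2 : ¬ (G.neighborSet u0 ∩ G.neighborSet u3) ⊆ (↑S3 : Set α) := by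
      intro hsub
      have h1 := Set.ncard_le_ncard hsub (Set.toFinite _)
      rw [Set.ncard_coe_finset] at h1
      omega
    obtain ⟨w, hwmem, hwS3⟩ := Set.not_subset.mp hnotsub2
    obtain ⟨hw0, hw3⟩ := hwmem
    have hw0' : G.Adj u0 w := hw0
    have hw3' : G.Adj u3 w := hw3
    exact hG (add_triangle G f3 hf3inj hf3adj u0 u3 w hadj3.symm hw0' hw3'
      (hr3 ▸ hu0S3) hu3r (hr3 ▸ hwS3))
end
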